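/- arXiv:2311.10017 — 19 statements merged into one kernel-verified Lean document; each statement's English description precedes it below -/
import Mathlib

section
/- Let A be a bounded distributive lattice and let □ : A → A satisfy □(a ⊓ b) = □a ⊓ □b for all a, b and □⊤ = ⊤. Order the prime filters of A by inclusion and define a relation R on them by U R V iff for all a, □a ∈ U implies a ∈ V. Then the map η sending a ∈ A to the set η(a) = {U : U is a prime filter of A and a ∈ U} is an injective map into the upsets of the inclusion-ordered poset of prime filters satisfying η(a ⊓ b) = η(a) ∩ η(b), η(a ⊔ b) = η(a) ∪ η(b), η(⊤) = the set of all prime filters, η(⊥) = ∅, and moreover η(□a) = {U : for every prime filter V, U R V implies a ∈ V} for all a ∈ A. -/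
/-- A prime filter of a bounded distributive lattice: upward closed, closed under
binary meets, contains `⊤`, omits `⊥`, and joins in it have a member in it. -/
def IsPrimeFilter {A : Type*} [DistribLattice A] [BoundedOrder A] (F : Set A) : Prop :=
  (∀ a b : A, a ∈ F → a ≤ b → b ∈ F) ∧
  (∀ a b : A, a ∈ F → b ∈ F → a ⊓ b ∈ F) ∧
  (⊤ : A) ∈ F ∧ (⊥ : A) ∉ F ∧
  (∀ a b : A, a ⊔ b ∈ F → a ∈ F ∨ b ∈ F)

open Order in
lemma exists_primeFilter {A : Type*} [DistribLattice A] [BoundedOrder A]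
    (F : PFilter A) (I : Ideal A) (h : Disjoint (F : Set A) (I : Set A)) :
    ∃ P : Set A, IsPrimeFilter P ∧ (F : Set A) ⊆ P ∧ ∀ x ∈ I, x ∉ P := by
  obtain ⟨J, hJp, hIJ, hJF⟩ := DistribLattice.prime_ideal_of_disjoint_filter_ideal h
  refine ⟨(J : Set A)ᶜ, ?_, ?_, ?_⟩
  · refine ⟨fun a b ha hab hb => ha (J.lower hab hb),
      fun a b ha hb => ?_, ?_, ?_, fun a b hab => ?_⟩
    · intro hmem
      rcases hJp.mem_or_mem hmem with h' | h' <;> [exact ha h'; exact hb h']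
    · exact Set.disjoint_left.1 hJF F.top_mem
    · simp only [Set.mem_compl_iff, SetLike.mem_coe, not_not]; exact J.bot_mem
      -- ⊥ ∈ J
    · by_contra hc
      push_neg at hc
      simp only [Set.mem_compl_iff, not_not] at hc
      exact hab (Order.Ideal.sup_mem hc.1 hc.2)
  · exact fun x hx => Set.disjoint_left.1 hJF hx
  · exact fun x hx hxc => hxc (hIJ hx)

theorem stmt0 {A : Type*} [DistribLattice A] [BoundedOrder A]
    (box : A → A)
    (hmeet : ∀ a b : A, box (a ⊓ b) = box a ⊓ box b) (htop : box ⊤ = ⊤)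
    (R : {F : Set A // IsPrimeFilter F} → {F : Set A // IsPrimeFilter F} → Prop)
    (hR : ∀ U V, R U V ↔ ∀ a : A, box a ∈ U.val → a ∈ V.val)
    (η : A → Set {F : Set A // IsPrimeFilter F})
    (hη : ∀ a : A, η a = {U | a ∈ U.val}) :
    Function.Injective η ∧
    (∀ a : A, ∀ U V : {F : Set A // IsPrimeFilter F}, U ∈ η a → U.val ⊆ V.val → V ∈ η a) ∧
    (∀ a b : A, η (a ⊓ b) = η a ∩ η b) ∧
    (∀ a b : A, η (a ⊔ b) = η a ∪ η b) ∧
    η ⊤ = Set.univ ∧ η ⊥ = ∅ ∧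
    (∀ a : A, η (box a) = {U | ∀ V, R U V → a ∈ V.val}) := by
  -- separation: if ¬ a ≤ b there is a prime filter containing a but not b
  have sep : ∀ a b : A, ¬ a ≤ b → ∃ P : Set A, IsPrimeFilter P ∧ a ∈ P ∧ b ∉ P := by
    intro a b hab
    have hdisj : Disjoint ((Order.PFilter.principal a : Order.PFilter A) : Set A)
        ((Order.Ideal.principal b : Order.Ideal A) : Set A) := by
      rw [Set.disjoint_left]
      intro x hx hx'
      exact hab (le_trans hx hx')
    obtain ⟨P, hP, hFP, hIP⟩ := exists_primeFilter _ _ hdisj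
    exact ⟨P, hP, hFP (le_refl a), hIP b (le_refl b)⟩
  refine ⟨?_, ?_, ?_, ?_, ?_, ?_, ?_⟩
  · intro a b hab
    by_contra hne
    have : ¬ (a ≤ b ∧ b ≤ a) := fun h => hne (le_antisymm h.1 h.2)
    rcases not_and_or.1 this with h | h
    · obtain ⟨P, hP, haP, hbP⟩ := sep a b h
      have : (⟨P, hP⟩ : {F : Set A // IsPrimeFilter F}) ∈ η a := by rw [hη]; exact haP
      rw [hab, hη] at this
      exact hbP this
    · obtain ⟨P, hP, haP, hbP⟩ := sep b a h
      have : (⟨P, hP⟩ : {F : Set A // IsPrimeFilter F}) ∈ η b := by rw [hη]; exact haP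
      rw [← hab, hη] at this
      exact hbP this
  · intro a U V hU hUV
    rw [hη] at hU ⊢
    exact hUV hU
  · intro a b
    ext U
    simp only [hη, Set.mem_setOf_eq, Set.mem_inter_iff]
    constructor
    · intro h
      exact ⟨U.2.1 _ _ h inf_le_left, U.2.1 _ _ h inf_le_right⟩
    · intro ⟨h1, h2⟩
      exact U.2.2.1 _ _ h1 h2
  · intro a b
    ext U
    simp only [hη, Set.mem_setOf_eq, Set.mem_union]
    constructor
    · exact U.2.2.2.2.2 a b
    · rintro (h | h)
      · exact U.2.1 _ _ h le_sup_left
      · exact U.2.1 _ _ h le_sup_right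
  · ext U
    simp [hη, U.2.2.2.1]
  · ext U
    simp [hη, U.2.2.2.2.1]
  · intro a
    ext U
    simp only [hη, Set.mem_setOf_eq]
    constructor
    · intro h V hRV
      exact (hR U V).1 hRV a h
    · intro h
      by_contra hbox
      -- box is monotone
      have hmono : ∀ x y : A, x ≤ y → box x ≤ box y := by
        intro x y hxy
        have : box (x ⊓ y) = box x ⊓ box y := hmeet x y
        rw [inf_eq_left.2 hxy] at this
        exact inf_eq_left.1 this.symm
      -- the set F₀ = {b | box b ∈ U} is a filter
      set F0 : Set A := {b | box b ∈ U.val} with hF0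
      have hpf : Order.IsPFilter F0 := by
        refine Order.IsPFilter.of_def ⟨⊤, ?_⟩ ?_ ?_
        · show box ⊤ ∈ U.val; rw [htop]; exact U.2.2.2.1
        · intro x hx y hy
          refine ⟨x ⊓ y, ?_, inf_le_left, inf_le_right⟩
          show box (x ⊓ y) ∈ U.val
          rw [hmeet]
          exact U.2.2.1 _ _ hx hy
        · intro x y hxy hx
          exact U.2.1 _ _ hx (hmono x y hxy)
      have hdisj : Disjoint ((hpf.toPFilter : Order.PFilter A) : Set A)
          ((Order.Ideal.principal a : Order.Ideal A) : Set A) := by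
        rw [Set.disjoint_left]
        intro x hx hx'
        have hxF0 : x ∈ F0 := hx
        have : a ∈ F0 := U.2.1 _ _ hxF0 (hmono x a hx')
        exact hbox this
      obtain ⟨P, hP, hFP, hIP⟩ := exists_primeFilter _ _ hdisj
      have hRUV : R U ⟨P, hP⟩ := by
        rw [hR]
        intro c hc
        exact hFP (show c ∈ F0 from hc)
      exact hIP a (le_refl a) (h ⟨P, hP⟩ hRUV)
end

section
/- Let A be a bounded distributive lattice and let ♦₋ : A → A satisfy ♦₋(a ⊓ b) = ♦₋a ⊔ ♦₋b for all a, b and ♦₋⊤ = ⊥ (a negative diamond operator). Order the prime filters of A by inclusion and define a relation R on them by U R V iff for all a, a ∉ V implies ♦₋a ∈ U. Then the map η sending a ∈ A to η(a) = {U : U is a prime filter of A and a ∈ U} is an injective map into the upsets of the inclusion-ordered poset of prime filters satisfying η(a ⊓ b) = η(a) ∩ η(b), η(a ⊔ b) = η(a) ∪ η(b), η(⊤) = the set of all prime filters, η(⊥) = ∅, and moreover η(♦₋a) = {U : there exists a prime filter V with U R V and a ∉ V} for all a ∈ A. -/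
/-- Separation lemma: a filter-like set avoiding `a` extends to a prime filter avoiding `a`. -/
lemma exists_primeFilter_s1 {A : Type*} [DistribLattice A] [BoundedOrder A]
    {F : Set A} (hup : ∀ x y : A, x ∈ F → x ≤ y → y ∈ F)
    (hmeet : ∀ x y : A, x ∈ F → y ∈ F → x ⊓ y ∈ F)
    (htop : (⊤ : A) ∈ F) {a : A} (ha : a ∉ F) :
    ∃ V : Set A, IsPrimeFilter V ∧ F ⊆ V ∧ a ∉ V := by
  have hpf : Order.IsPFilter F := by
    refine Order.IsPFilter.of_def ⟨⊤, htop⟩ ?_ (fun {x y} h hx => hup x y hx h)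
    intro x hx y hy
    exact ⟨x ⊓ y, hmeet x y hx hy, inf_le_left, inf_le_right⟩
  have hdisj : Disjoint (hpf.toPFilter : Set A) ((Order.Ideal.principal a : Order.Ideal A) : Set A) := by
    rw [Set.disjoint_left]
    intro x hx hx'
    have hxF : x ∈ F := hx
    have hxa : x ≤ a := Order.Ideal.mem_principal.mp hx'
    exact ha (hup x a hxF hxa)
  obtain ⟨J, hJprime, hIJ, hJdisj⟩ :=
    DistribLattice.prime_ideal_of_disjoint_filter_ideal hdisj
  refine ⟨(J : Set A)ᶜ, ⟨?_, ?_, ?_, ?_, ?_⟩, ?_, ?_⟩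
  · intro x y hx hxy hy
    exact hx (J.lower hxy hy)
  · intro x y hx hy hxy
    rcases hJprime.mem_or_mem hxy with h | h
    · exact hx h
    · exact hy h
  · exact hJprime.toIsProper.top_notMem
  · simp [J.bot_mem]
  · intro x y hxy
    by_contra h
    push_neg at h
    simp only [Set.mem_compl_iff, not_not] at h
    exact hxy (Order.Ideal.sup_mem h.1 h.2)
  · intro x hx hxJ
    exact Set.disjoint_left.mp hJdisj hx hxJ
  · intro h
    exact h (hIJ (Order.Ideal.mem_principal_self))

theorem stmt1 {A : Type*} [DistribLattice A] [BoundedOrder A]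
    (diam : A → A)
    (hmeet : ∀ a b : A, diam (a ⊓ b) = diam a ⊔ diam b) (htop : diam ⊤ = ⊥)
    (R : {F : Set A // IsPrimeFilter F} → {F : Set A // IsPrimeFilter F} → Prop)
    (hR : ∀ U V, R U V ↔ ∀ a : A, a ∉ V.val → diam a ∈ U.val)
    (η : A → Set {F : Set A // IsPrimeFilter F})
    (hη : ∀ a : A, η a = {U | a ∈ U.val}) :
    Function.Injective η ∧
    (∀ a : A, ∀ U V : {F : Set A // IsPrimeFilter F}, U ∈ η a → U.val ⊆ V.val → V ∈ η a) ∧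
    (∀ a b : A, η (a ⊓ b) = η a ∩ η b) ∧
    (∀ a b : A, η (a ⊔ b) = η a ∪ η b) ∧
    η ⊤ = Set.univ ∧ η ⊥ = ∅ ∧
    (∀ a : A, η (diam a) = {U | ∃ V, R U V ∧ a ∉ V.val}) := by
  -- helper: separate a ≰ b by a prime filter
  have sep : ∀ a b : A, ¬ a ≤ b → ∃ V : Set A, IsPrimeFilter V ∧ a ∈ V ∧ b ∉ V := by
    intro a b hab
    obtain ⟨V, hV, hsub, hbV⟩ := exists_primeFilter_s1 (F := {x : A | a ≤ x})
      (fun x y hx hxy => le_trans hx hxy)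
      (fun x y hx hy => le_inf hx hy) le_top hab
    exact ⟨V, hV, hsub (le_refl a), hbV⟩
  refine ⟨?_, ?_, ?_, ?_, ?_, ?_, ?_⟩
  · -- injectivity
    intro a b hab
    by_contra hne
    have key : ∀ x y : A, ¬ x ≤ y → η x = η y → False := by
      intro x y hxy heq
      obtain ⟨V, hV, hxV, hyV⟩ := sep x y hxy
      have h1 : (⟨V, hV⟩ : {F : Set A // IsPrimeFilter F}) ∈ η x := by rw [hη]; exact hxV
      have h2 : (⟨V, hV⟩ : {F : Set A // IsPrimeFilter F}) ∉ η y := by rw [hη]; exact hyV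
      exact h2 (heq ▸ h1)
    rcases (not_and_or.mp (fun h : a ≤ b ∧ b ≤ a => hne (le_antisymm h.1 h.2))) with h | h
    · exact key a b h hab
    · exact key b a h hab.symm
  · -- upset
    intro a U V hU hUV
    rw [hη] at *
    exact hUV hU
  · intro a b
    ext U
    simp only [hη, Set.mem_setOf_eq, Set.mem_inter_iff]
    obtain ⟨hup, hmeet', _, _, _⟩ := U.2
    constructor
    · intro h
      exact ⟨hup _ _ h inf_le_left, hup _ _ h inf_le_right⟩
    · intro ⟨h1, h2⟩
      exact hmeet' _ _ h1 h2
  · intro a b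
    ext U
    simp only [hη, Set.mem_setOf_eq, Set.mem_union]
    obtain ⟨hup, _, _, _, hprime⟩ := U.2
    constructor
    · exact hprime a b
    · rintro (h | h)
      · exact hup _ _ h le_sup_left
      · exact hup _ _ h le_sup_right
  · ext U
    simp only [hη, Set.mem_setOf_eq, Set.mem_univ, iff_true]
    exact U.2.2.2.1
  · ext U
    simp only [hη, Set.mem_setOf_eq, Set.mem_empty_iff_false, iff_false]
    exact U.2.2.2.2.1
  · intro a
    ext U
    simp only [hη, Set.mem_setOf_eq]
    constructor
    · intro hda
      -- build the filter G = {b | diam b ∉ U}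
      obtain ⟨hup, hmeetU, htopU, hbotU, hprimeU⟩ := U.2
      have hGup : ∀ x y : A, diam x ∉ U.val → x ≤ y → diam y ∉ U.val := by
        intro x y hx hxy hy
        have : x ⊓ y = x := inf_eq_left.mpr hxy
        have : diam x = diam x ⊔ diam y := by rw [← hmeet, this]
        exact hx (this ▸ hup _ _ hy le_sup_right)
      have hGmeet : ∀ x y : A, diam x ∉ U.val → diam y ∉ U.val → diam (x ⊓ y) ∉ U.val := by
        intro x y hx hy h
        rw [hmeet] at h
        rcases hprimeU _ _ h with h | h
        · exact hx h
        · exact hy h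
      have hGtop : diam (⊤ : A) ∉ U.val := by rw [htop]; exact hbotU
      have haG : ¬ (diam a ∉ U.val) := fun h => h hda
      obtain ⟨V, hV, hsub, haV⟩ := exists_primeFilter_s1 (F := {x : A | diam x ∉ U.val})
        hGup hGmeet hGtop haG
      refine ⟨⟨V, hV⟩, ?_, haV⟩
      rw [hR]
      intro b hbV
      by_contra hdb
      exact hbV (hsub hdb)
    · rintro ⟨V, hRV, haV⟩
      exact (hR U V).mp hRV a haV
end

section
/- Let (W,≤) be a poset, let R₁ be a □₊-relation on W and R₂ a □₋-relation on W. Then the following are equivalent: (i) for all upsets a, b of W, □₋a ∩ □₊(a ∪ b) ⊆ □₊b, where □₊x := {u : ∀v, u R₁ v → v ∈ x} and □₋x := {u : ∀v, u R₂ v → v ∉ x}; (ii) for all u, v with u R₁ v there exists v' with v' ≤ v, u R₁ v' and u R₂ v'. -/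
theorem stmt3 {W : Type*} [PartialOrder W] (R₁ R₂ : W → W → Prop)
    (h₁ : ∀ u v u' v' : W, R₁ u v → u' ≤ u → v ≤ v' → R₁ u' v')
    (h₂ : ∀ u v u' v' : W, R₂ u v → u' ≤ u → v' ≤ v → R₂ u' v') :
    (∀ a b : Set W, (∀ u v : W, u ∈ a → u ≤ v → v ∈ a) → (∀ u v : W, u ∈ b → u ≤ v → v ∈ b) →
      {u : W | ∀ v, R₂ u v → v ∉ a} ∩ {u : W | ∀ v, R₁ u v → v ∈ a ∪ b} ⊆
        {u : W | ∀ v, R₁ u v → v ∈ b}) ↔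
    (∀ u v : W, R₁ u v → ∃ v', v' ≤ v ∧ R₁ u v' ∧ R₂ u v') := by
  constructor
  · intro h u v huv
    by_contra hc
    push_neg at hc
    have := h {w | ¬ R₂ u w} {w | ¬ w ≤ v}
      (fun x y hx hxy hR => hx (h₂ u y u x hR le_rfl hxy))
      (fun x y hx hxy hy => hx (le_trans hxy hy))
      (Set.mem_inter (fun w hw hw' => hw' hw)
        (fun w hw => by
          by_cases hle : w ≤ v
          · exact Or.inl (fun hR2 => hc w hle hw hR2)
          · exact Or.inr hle))
    exact this v huv le_rfl
  · rintro h a b ha hb u ⟨hu1, hu2⟩ v huv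
    obtain ⟨v', hle, hr1, hr2⟩ := h u v huv
    have := hu2 v' hr1
    rcases this with hA | hB
    · exact absurd hA (hu1 v' hr2)
    · exact hb v' v hB hle
end

section
/- Let (W,≤) be a poset, let R₁ be a ♦₊-relation on W and R₂ a □₋-relation on W. Then the following are equivalent: (i) for all upsets a, c of W, if ♦₊a ⊆ □₋a ∪ c then ♦₊a ⊆ c, where ♦₊x := {u : ∃v, u R₁ v ∧ v ∈ x} and □₋x := {u : ∀v, u R₂ v → v ∉ x}; (ii) for all u, v with u R₁ v there exists u' with u' ≤ u, u' R₁ v and u' R₂ v. -/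
theorem stmt4 {W : Type*} [PartialOrder W] (R₁ R₂ : W → W → Prop)
    (h₁ : ∀ u v u' v' : W, R₁ u v → u ≤ u' → v' ≤ v → R₁ u' v')
    (h₂ : ∀ u v u' v' : W, R₂ u v → u' ≤ u → v' ≤ v → R₂ u' v') :
    (∀ a c : Set W, (∀ u v : W, u ∈ a → u ≤ v → v ∈ a) → (∀ u v : W, u ∈ c → u ≤ v → v ∈ c) →
      ({u : W | ∃ v, R₁ u v ∧ v ∈ a} ⊆ {u : W | ∀ v, R₂ u v → v ∉ a} ∪ c →
        {u : W | ∃ v, R₁ u v ∧ v ∈ a} ⊆ c)) ↔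
    (∀ u v : W, R₁ u v → ∃ u', u' ≤ u ∧ R₁ u' v ∧ R₂ u' v) := by
  constructor
  · intro H u v huv
    have key := H {w | v ≤ w} {x | ∃ u', u' ≤ x ∧ R₁ u' v ∧ R₂ u' v}
      (fun a b ha hab => le_trans ha hab)
      (fun a b ⟨u', hu', h1, h2⟩ hab => ⟨u', le_trans hu' hab, h1, h2⟩)
      (by
        rintro x ⟨w, hxw, hvw⟩
        by_cases hb : ∀ w', R₂ x w' → ¬ v ≤ w'
        · exact Or.inl hb
        · push_neg at hb
          obtain ⟨w', hxw', hvw'⟩ := hb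
          exact Or.inr ⟨x, le_refl x, h₁ x w x v hxw (le_refl x) hvw,
            h₂ x w' x v hxw' (le_refl x) hvw'⟩)
    obtain ⟨u', hle, h1, h2⟩ := key ⟨v, huv, le_refl v⟩
    exact ⟨u', hle, h1, h2⟩
  · intro H a c ha hc hyp u hu
    obtain ⟨v, huv, hva⟩ := hu
    obtain ⟨u', hle, h1, h2⟩ := H u v huv
    have : u' ∈ {u : W | ∀ v, R₂ u v → v ∉ a} ∪ c := hyp ⟨v, h1, hva⟩
    rcases this with h | h
    · exact absurd hva (h v h2)
    · exact hc u' u h hle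
end

section
/- Let (W,≤) be a poset, let R₁ be a ♦₊-relation on W and R₂ a □₊-relation on W. Then the following are equivalent: (i) for all upsets a, b, c of W, if ♦₊a ⊆ □₊b ∪ c then ♦₊a ⊆ ♦₊(a ∩ b) ∪ c, where ♦₊x := {u : ∃v, u R₁ v ∧ v ∈ x} and □₊x := {u : ∀v, u R₂ v → v ∈ x}; (ii) for all u, v with u R₁ v there exist u' ≤ u and v' ≥ v such that u' R₁ v, u R₁ v' and u' R₂ v'. -/
theorem stmt5 {W : Type*} [PartialOrder W] (R₁ R₂ : W → W → Prop)
    (h₁ : ∀ u v u' v' : W, R₁ u v → u ≤ u' → v' ≤ v → R₁ u' v')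
    (h₂ : ∀ u v u' v' : W, R₂ u v → u' ≤ u → v ≤ v' → R₂ u' v') :
    (∀ a b c : Set W, (∀ u v : W, u ∈ a → u ≤ v → v ∈ a) →
      (∀ u v : W, u ∈ b → u ≤ v → v ∈ b) → (∀ u v : W, u ∈ c → u ≤ v → v ∈ c) →
      ({u : W | ∃ v, R₁ u v ∧ v ∈ a} ⊆ {u : W | ∀ v, R₂ u v → v ∈ b} ∪ c →
        {u : W | ∃ v, R₁ u v ∧ v ∈ a} ⊆ {u : W | ∃ v, R₁ u v ∧ v ∈ a ∩ b} ∪ c)) ↔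
    (∀ u v : W, R₁ u v →
      ∃ u' v', u' ≤ u ∧ v ≤ v' ∧ R₁ u' v ∧ R₁ u v' ∧ R₂ u' v') := by
  constructor
  · intro H u v huv
    have key := H {w | v ≤ w} {w | ∃ u', u' ≤ u ∧ R₁ u' v ∧ R₂ u' w} {x | ¬ x ≤ u}
      (fun x y hx hxy => le_trans hx hxy)
      (fun x y hx hxy => by
        obtain ⟨u', hu', hr1, hr2⟩ := hx
        exact ⟨u', hu', hr1, h₂ u' x u' y hr2 le_rfl hxy⟩)
      (fun x y hx hxy hy => hx (le_trans hxy hy))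
      (by
        intro x hx
        rcases Classical.em (x ≤ u) with hxu | hxu
        · left
          intro w hw
          obtain ⟨w', hr1, hvw'⟩ := hx
          exact ⟨x, hxu, h₁ x w' x v hr1 le_rfl hvw', hw⟩
        · exact Or.inr hxu)
    have hu : u ∈ ({u : W | ∃ v', R₁ u v' ∧ v' ∈ {w | v ≤ w}} : Set W) := ⟨v, huv, le_rfl⟩
    rcases key hu with h | h
    · obtain ⟨v', hr1, hv', u', hu', hr1', hr2⟩ := h
      exact ⟨u', v', hu', hv', hr1', hr1, hr2⟩
    · exact absurd le_rfl h
  · intro H a b c ha hb hc hsub x hx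
    obtain ⟨v, hr1, hva⟩ := hx
    obtain ⟨u', v', hu', hv', hr1', hr1'', hr2⟩ := H x v hr1
    have hu'd : u' ∈ ({u : W | ∃ v, R₁ u v ∧ v ∈ a} : Set W) := ⟨v, hr1', hva⟩
    rcases hsub hu'd with h | h
    · exact Or.inl ⟨v', hr1'', ha v v' hva hv', h v' hr2⟩
    · exact Or.inr (hc u' x h hu')
end

section
/- Let W be the set of pairs (q, i) with q a real number satisfying 0 ≤ q ≤ 1 and i a Boolean, partially ordered by (q,i) ≤ (r,j) iff q ≤ r and i = j. Define (q,i) R^□ (r,j) iff i = false, j = true and q ≤ r, and (q,i) R^♦ (r,j) iff i = false, j = true and r < q. Then: R^□ is a □₊-relation on W; R^♦ is a ♦₊-relation on W; for all u, v with u R^♦ v there exist u' ≤ u and v' ≥ v such that u' R^♦ v, u R^♦ v' and u' R^□ v'; yet R^□ ∩ R^♦ = ∅ while R^♦ ≠ ∅ (so R^♦ and R^□ are not generated by any single relation contained in both). -/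
/-- The carrier: pairs of a real number in `[0,1]` and a Boolean. -/
def W6 : Type := {q : ℝ // 0 ≤ q ∧ q ≤ 1} × Bool

/-- The partial order: `(q,i) ≤ (r,j)` iff `q ≤ r` and `i = j`. -/
def le6 (p q : W6) : Prop := p.1.1 ≤ q.1.1 ∧ p.2 = q.2

/-- The box relation: `(q,i) R□ (r,j)` iff `i = false`, `j = true` and `q ≤ r`. -/
def Rbox6 (p q : W6) : Prop := p.2 = false ∧ q.2 = true ∧ p.1.1 ≤ q.1.1

/-- The diamond relation: `(q,i) R♦ (r,j)` iff `i = false`, `j = true` and `r < q`. -/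
def Rdia6 (p q : W6) : Prop := p.2 = false ∧ q.2 = true ∧ q.1.1 < p.1.1

theorem stmt6 :
    -- `R□` is a `□₊`-relation
    (∀ u v u' v' : W6, Rbox6 u v → le6 u' u → le6 v v' → Rbox6 u' v') ∧
    -- `R♦` is a `♦₊`-relation
    (∀ u v u' v' : W6, Rdia6 u v → le6 u u' → le6 v' v → Rdia6 u' v') ∧
    -- the frame condition `(♦₊, □₊)` holds
    (∀ u v : W6, Rdia6 u v →
      ∃ u' v' : W6, le6 u' u ∧ le6 v v' ∧ Rdia6 u' v ∧ Rdia6 u v' ∧ Rbox6 u' v') ∧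
    -- yet the intersection of the two relations is empty
    (∀ u v : W6, ¬ (Rbox6 u v ∧ Rdia6 u v)) ∧
    -- while `R♦` is nonempty
    (∃ u v : W6, Rdia6 u v) := by
  refine ⟨?_, ?_, ?_, ?_, ?_⟩
  · rintro u v u' v' ⟨hu, hv, hle⟩ ⟨h1, h2⟩ ⟨h3, h4⟩
    exact ⟨h2.trans hu, h4 ▸ hv, le_trans h1 (le_trans hle h3)⟩
  · rintro u v u' v' ⟨hu, hv, hlt⟩ ⟨h1, h2⟩ ⟨h3, h4⟩
    exact ⟨h2 ▸ hu, h4.trans hv, lt_of_le_of_lt h3 (lt_of_lt_of_le hlt h1)⟩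
  · rintro u v ⟨hu, hv, hlt⟩
    set m : ℝ := (v.1.1 + u.1.1) / 2 with hm
    have hm0 : 0 ≤ m := by have := v.1.2.1; have := u.1.2.1; positivity
    have hm1 : m ≤ 1 := by
      have := v.1.2.2; have := u.1.2.2; rw [hm]; linarith
    have hvm : v.1.1 < m := by rw [hm]; linarith
    have hmu : m < u.1.1 := by rw [hm]; linarith
    refine ⟨(⟨m, hm0, hm1⟩, false), (⟨m, hm0, hm1⟩, true),
      ⟨hmu.le, hu.symm⟩, ⟨hvm.le, hv⟩, ⟨rfl, hv, hvm⟩, ⟨hu, rfl, hmu⟩, ⟨rfl, rfl, le_refl m⟩⟩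
  · rintro u v ⟨⟨_, _, hle⟩, ⟨_, _, hlt⟩⟩
    exact absurd hle (not_le.mpr hlt)
  · exact ⟨(⟨1, by norm_num⟩, false), (⟨0, by norm_num⟩, true), rfl, rfl, by norm_num⟩
end

section
/- Let A be a bounded distributive lattice and let ♦ : A → A satisfy ♦(a ⊔ b) = ♦a ⊔ ♦b for all a, b and ♦⊥ = ⊥. Let U and V be prime filters of A such that ♦a ∈ U for all a ∈ V. Then there exists a prime filter V' of A with V ⊆ V', with ♦a ∈ U for all a ∈ V', and which is maximal with this property: every prime filter W with V' ⊆ W such that ♦a ∈ U for all a ∈ W equals V'. -/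
theorem stmt7 {A : Type*} [DistribLattice A] [BoundedOrder A]
    (dia : A → A)
    (hjoin : ∀ a b : A, dia (a ⊔ b) = dia a ⊔ dia b) (hbot : dia ⊥ = ⊥)
    (U V : Set A) (hU : IsPrimeFilter U) (hV : IsPrimeFilter V)
    (hUV : ∀ a : A, a ∈ V → dia a ∈ U) :
    ∃ V' : Set A, IsPrimeFilter V' ∧ V ⊆ V' ∧ (∀ a : A, a ∈ V' → dia a ∈ U) ∧
      (∀ W : Set A, IsPrimeFilter W → V' ⊆ W → (∀ a : A, a ∈ W → dia a ∈ U) → W = V') := by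
  set S : Set (Set A) := {F | IsPrimeFilter F ∧ (∀ a : A, a ∈ F → dia a ∈ U)} with hS
  have hzorn : ∀ c ⊆ S, IsChain (· ⊆ ·) c → c.Nonempty → ∃ ub ∈ S, ∀ s ∈ c, s ⊆ ub := by
    intro c hcS hchain ⟨F0, hF0⟩
    refine ⟨⋃₀ c, ⟨⟨?_, ?_, ?_, ?_, ?_⟩, ?_⟩, fun s hs => Set.subset_sUnion_of_mem hs⟩
    · rintro a b ⟨F, hF, haF⟩ hab
      exact ⟨F, hF, (hcS hF).1.1 a b haF hab⟩
    · rintro a b ⟨F, hF, haF⟩ ⟨G, hG, hbG⟩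
      rcases hchain.total hF hG with h | h
      · exact ⟨G, hG, (hcS hG).1.2.1 a b (h haF) hbG⟩
      · exact ⟨F, hF, (hcS hF).1.2.1 a b haF (h hbG)⟩
    · exact ⟨F0, hF0, (hcS hF0).1.2.2.1⟩
    · rintro ⟨F, hF, hbF⟩
      exact (hcS hF).1.2.2.2.1 hbF
    · rintro a b ⟨F, hF, habF⟩
      rcases (hcS hF).1.2.2.2.2 a b habF with h | h
      · exact Or.inl ⟨F, hF, h⟩
      · exact Or.inr ⟨F, hF, h⟩
    · rintro a ⟨F, hF, haF⟩
      exact (hcS hF).2 a haF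
  obtain ⟨m, hVm, hmS, hmax⟩ := zorn_subset_nonempty S hzorn V ⟨hV, hUV⟩
  exact ⟨m, hmS.1, hVm, hmS.2, fun W hW hmW hWU => le_antisymm (hmax (y := W) ⟨hW, hWU⟩ hmW) hmW⟩
end

section
/- Let A be a bounded distributive lattice and let ♦₋ : A → A satisfy ♦₋(a ⊓ b) = ♦₋a ⊔ ♦₋b for all a, b and ♦₋⊤ = ⊥. Let U and V be prime filters of A such that ♦₋a ∈ U for all a ∉ V. Then there exists a prime filter V' of A with V' ⊆ V, with ♦₋a ∈ U for all a ∉ V', and which is minimal with this property: every prime filter W with W ⊆ V' such that ♦₋a ∈ U for all a ∉ W equals V'. -/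
theorem stmt8 {A : Type*} [DistribLattice A] [BoundedOrder A]
    (diam : A → A)
    (hmeet : ∀ a b : A, diam (a ⊓ b) = diam a ⊔ diam b) (htop : diam ⊤ = ⊥)
    (U V : Set A) (hU : IsPrimeFilter U) (hV : IsPrimeFilter V)
    (hUV : ∀ a : A, a ∉ V → diam a ∈ U) :
    ∃ V' : Set A, IsPrimeFilter V' ∧ V' ⊆ V ∧ (∀ a : A, a ∉ V' → diam a ∈ U) ∧
      (∀ W : Set A, IsPrimeFilter W → W ⊆ V' → (∀ a : A, a ∉ W → diam a ∈ U) → W = V') := by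
  set S : Set (Set A) := {W | IsPrimeFilter W ∧ W ⊆ V ∧ ∀ a : A, a ∉ W → diam a ∈ U} with hS
  have key : ∀ c ⊆ S, IsChain (· ⊆ ·) c → c.Nonempty →
      ∃ lb ∈ S, ∀ s ∈ c, lb ⊆ s := by
    intro c hcS hchain ⟨W₀, hW₀⟩
    refine ⟨⋂₀ c, ⟨⟨?_, ?_, ?_, ?_, ?_⟩, ?_, ?_⟩, fun s hs => Set.sInter_subset_of_mem hs⟩
    · intro a b ha hab
      exact fun W hW => (hcS hW).1.1 a b (ha W hW) hab
    · intro a b ha hb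
      exact fun W hW => (hcS hW).1.2.1 a b (ha W hW) (hb W hW)
    · exact fun W hW => (hcS hW).1.2.2.1
    · intro h
      exact (hcS hW₀).1.2.2.2.1 (h W₀ hW₀)
    · intro a b hab
      by_contra h
      push_neg at h
      obtain ⟨ha, hb⟩ := h
      simp only [Set.mem_sInter, not_forall] at ha hb
      obtain ⟨W₁, hW₁, ha₁⟩ := ha
      obtain ⟨W₂, hW₂, hb₂⟩ := hb
      rcases hchain.total hW₁ hW₂ with h12 | h21
      · rcases (hcS hW₁).1.2.2.2.2 a b (hab W₁ hW₁) with h | h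
        · exact ha₁ h
        · exact hb₂ (h12 h)
      · rcases (hcS hW₂).1.2.2.2.2 a b (hab W₂ hW₂) with h | h
        · exact ha₁ (h21 h)
        · exact hb₂ h
    · exact (Set.sInter_subset_of_mem hW₀).trans (hcS hW₀).2.1
    · intro a ha
      simp only [Set.mem_sInter, not_forall] at ha
      obtain ⟨W, hW, haW⟩ := ha
      exact (hcS hW).2.2 a haW
  obtain ⟨m, _, hmS, hmin⟩ := zorn_superset_nonempty S key V ⟨hV, subset_rfl, hUV⟩
  exact ⟨m, hmS.1, hmS.2.1, hmS.2.2, fun W hW hWm hWU =>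
    le_antisymm hWm (hmin ⟨hW, hWm.trans hmS.2.1, hWU⟩ hWm)⟩
end

section
/- Let (W,≤) be a poset, let R^♦ be a minimally generated ♦₊-relation on W and R^□ a minimally generated □₊-relation on W. Then the following are equivalent: (i) R^♦ = ♦₊[R^♦ ∩ R^□] and R^□ = □₊[R^♦ ∩ R^□], where for a relation S, u ♦₊[S] v iff there exist u' ≤ u and v' ≥ v with u' S v', and u □₊[S] v iff there exist u' ≥ u and v' ≤ v with u' S v'; (ii) for all u R^♦ v there exist u' ≤ u and v' ≥ v with u' R^♦ v, u R^♦ v' and u' R^□ v', and for all u R^□ v there exist u' ≥ u and v' ≤ v with u' R^□ v, u R^□ v' and u' R^♦ v'. -/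
theorem stmt9 {W : Type*} [PartialOrder W] (Rd Rb : W → W → Prop)
    -- `Rd` is a `♦₊`-relation
    (hd : ∀ u v u' v' : W, Rd u v → u ≤ u' → v' ≤ v → Rd u' v')
    -- `Rd` is minimally generated
    (hdmin : ∀ u v : W, Rd u v → ∃ u₀ v₀, u₀ ≤ u ∧ v ≤ v₀ ∧ Rd u₀ v₀ ∧
      ∀ u₁ v₁, u₁ ≤ u₀ → v₀ ≤ v₁ → Rd u₁ v₁ → u₁ = u₀ ∧ v₁ = v₀)
    -- `Rb` is a `□₊`-relation
    (hb : ∀ u v u' v' : W, Rb u v → u' ≤ u → v ≤ v' → Rb u' v')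
    -- `Rb` is minimally generated
    (hbmin : ∀ u v : W, Rb u v → ∃ u₀ v₀, u ≤ u₀ ∧ v₀ ≤ v ∧ Rb u₀ v₀ ∧
      ∀ u₁ v₁, u₀ ≤ u₁ → v₁ ≤ v₀ → Rb u₁ v₁ → u₁ = u₀ ∧ v₁ = v₀) :
    -- (i) both relations are generated by their intersection
    ((∀ u v : W, Rd u v ↔ ∃ u' v', u' ≤ u ∧ v ≤ v' ∧ Rd u' v' ∧ Rb u' v') ∧
     (∀ u v : W, Rb u v ↔ ∃ u' v', u ≤ u' ∧ v' ≤ v ∧ Rd u' v' ∧ Rb u' v')) ↔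
    -- (ii) the two frame conditions hold
    ((∀ u v : W, Rd u v →
        ∃ u' v', u' ≤ u ∧ v ≤ v' ∧ Rd u' v ∧ Rd u v' ∧ Rb u' v') ∧
     (∀ u v : W, Rb u v →
        ∃ u' v', u ≤ u' ∧ v' ≤ v ∧ Rb u' v ∧ Rb u v' ∧ Rd u' v')) := by
  constructor
  · rintro ⟨h1, h2⟩
    constructor
    · intro u v huv
      obtain ⟨u', v', hu, hv, hrd, hrb⟩ := (h1 u v).1 huv
      exact ⟨u', v', hu, hv, hd u' v' u' v hrd le_rfl hv,
        hd u' v' u v' hrd hu le_rfl, hrb⟩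
    · intro u v huv
      obtain ⟨u', v', hu, hv, hrd, hrb⟩ := (h2 u v).1 huv
      exact ⟨u', v', hu, hv, hb u' v' u' v hrb le_rfl hv,
        hb u' v' u v' hrb hu le_rfl, hrd⟩
  · rintro ⟨h1, h2⟩
    constructor
    · intro u v
      constructor
      · intro huv
        obtain ⟨u₀, v₀, hu0, hv0, hrd0, hmin⟩ := hdmin u v huv
        obtain ⟨u', v', hu', hv', hrd1, hrd2, hrb⟩ := h1 u₀ v₀ hrd0
        obtain ⟨hequ, -⟩ := hmin u' v₀ hu' le_rfl hrd1
        obtain ⟨-, heqv⟩ := hmin u₀ v' le_rfl hv' hrd2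
        subst hequ heqv
        exact ⟨u', v', le_trans hu' hu0, le_trans hv0 hv', hrd0, hrb⟩
      · rintro ⟨u', v', hu, hv, hrd, _⟩
        exact hd u' v' u v hrd hu hv
    · intro u v
      constructor
      · intro huv
        obtain ⟨u₀, v₀, hu0, hv0, hrb0, hmin⟩ := hbmin u v huv
        obtain ⟨u', v', hu', hv', hrb1, hrb2, hrd⟩ := h2 u₀ v₀ hrb0
        obtain ⟨hequ, -⟩ := hmin u' v₀ hu' le_rfl hrb1
        obtain ⟨-, heqv⟩ := hmin u₀ v' le_rfl hv' hrb2
        subst hequ heqv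
        exact ⟨u', v', le_trans hu0 hu', le_trans hv' hv0, hrd, hrb0⟩
      · rintro ⟨u', v', hu, hv, _, hrb⟩
        exact hb u' v' u v hrb hu hv
end

section
/- Let A be a bounded distributive lattice with □₊ : A → A satisfying □₊(a ⊓ b) = □₊a ⊓ □₊b and □₊⊤ = ⊤, and □₋ : A → A satisfying □₋(a ⊔ b) = □₋a ⊓ □₋b and □₋⊥ = ⊤, such that □₋a ⊓ □₊(a ⊔ b) ≤ □₊b for all a, b ∈ A. Let U, V be prime filters of A such that □₊a ∈ U implies a ∈ V for all a. Then there exists a prime filter V' with V' ⊆ V such that □₊a ∈ U implies a ∈ V' for all a, and □₋a ∈ U implies a ∉ V' for all a. -/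
theorem stmt10 {A : Type*} [DistribLattice A] [BoundedOrder A]
    (boxp boxm : A → A)
    (hp1 : ∀ a b : A, boxp (a ⊓ b) = boxp a ⊓ boxp b) (hp2 : boxp ⊤ = ⊤)
    (hm1 : ∀ a b : A, boxm (a ⊔ b) = boxm a ⊓ boxm b) (hm2 : boxm ⊥ = ⊤)
    (hax : ∀ a b : A, boxm a ⊓ boxp (a ⊔ b) ≤ boxp b)
    (U V : Set A) (hU : IsPrimeFilter U) (hV : IsPrimeFilter V)
    (hUV : ∀ a : A, boxp a ∈ U → a ∈ V) :
    ∃ V' : Set A, IsPrimeFilter V' ∧ V' ⊆ V ∧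
      (∀ a : A, boxp a ∈ U → a ∈ V') ∧ (∀ a : A, boxm a ∈ U → a ∉ V') := by
  classical
  obtain ⟨hUup, hUmeet, hUtop, hUbot, hUprime⟩ := hU
  obtain ⟨hVup, hVmeet, hVtop, hVbot, hVprime⟩ := hV
  -- boxp is monotone
  have hpmono : ∀ a b : A, a ≤ b → boxp a ≤ boxp b := by
    intro a b hab
    have : boxp a = boxp a ⊓ boxp b := by rw [← hp1, inf_eq_left.mpr hab]
    rw [this]; exact inf_le_right
  -- boxm is antitone
  have hmanti : ∀ a b : A, a ≤ b → boxm b ≤ boxm a := by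
    intro a b hab
    have : boxm b = boxm a ⊓ boxm b := by rw [← hm1, sup_eq_right.mpr hab]
    rw [this]; exact inf_le_left
  -- The filter F = {a | boxp a ∈ U}
  set Fs : Set A := {a | boxp a ∈ U} with hFs
  have hFsfilter : Order.IsPFilter Fs := by
    refine Order.IsPFilter.of_def ⟨⊤, by simp [hFs, hp2, hUtop]⟩ ?_ ?_
    · intro a ha b hb
      refine ⟨a ⊓ b, ?_, inf_le_left, inf_le_right⟩
      simp only [hFs, Set.mem_setOf_eq, hp1] at *
      exact hUmeet _ _ ha hb
    · intro a b hab ha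
      exact hUup _ _ ha (hpmono _ _ hab)
  set F : Order.PFilter A := hFsfilter.toPFilter with hF
  have hFmem : ∀ a : A, a ∈ F ↔ boxp a ∈ U := fun a => Iff.rfl
  -- The ideal I
  set Is : Set A := {x | ∃ m c, boxm m ∈ U ∧ c ∉ V ∧ x ≤ m ⊔ c} with hIs
  have hIlower : ∀ x y : A, y ≤ x → x ∈ Is → y ∈ Is := by
    rintro x y hyx ⟨m, c, hm, hc, hx⟩
    exact ⟨m, c, hm, hc, hyx.trans hx⟩
  have hIdir : DirectedOn (· ≤ ·) Is := by
    rintro x ⟨m, c, hm, hc, hx⟩ y ⟨m', c', hm', hc', hy⟩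
    refine ⟨x ⊔ y, ⟨m ⊔ m', c ⊔ c', ?_, ?_, ?_⟩, le_sup_left, le_sup_right⟩
    · rw [hm1]; exact hUmeet _ _ hm hm'
    · intro h; rcases hVprime _ _ h with h | h
      exacts [hc h, hc' h]
    · refine sup_le (hx.trans ?_) (hy.trans ?_) <;>
        apply sup_le_sup <;> simp
  have hIbot : (⊥ : A) ∈ Is :=
    ⟨⊥, ⊥, by rw [hm2]; exact hUtop, hVbot, by simp⟩
  set I : Order.Ideal A := ⟨⟨Is, fun {x y} h hx => hIlower x y h hx⟩, ⟨⊥, hIbot⟩, hIdir⟩ with hI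
  have hImem : ∀ a : A, a ∈ I ↔ a ∈ Is := fun a => Iff.rfl
  -- Disjointness
  have hdisj : Disjoint (F : Set A) (I : Set A) := by
    rw [Set.disjoint_left]
    rintro a ha ⟨m, c, hm, hc, hmc⟩
    have h1 : boxp a ∈ U := ha
    have h2 : boxp (m ⊔ c) ∈ U := hUup _ _ h1 (hpmono _ _ hmc)
    have h3 : boxm m ⊓ boxp (m ⊔ c) ∈ U := hUmeet _ _ hm h2
    have h4 : boxp c ∈ U := hUup _ _ h3 (hax m c)
    exact hc (hUV c h4)
  obtain ⟨J, hJprime, hIJ, hFJ⟩ :=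
    DistribLattice.prime_ideal_of_disjoint_filter_ideal (F := F) (I := I) hdisj
  rw [Set.disjoint_left] at hFJ
  refine ⟨(J : Set A)ᶜ, ⟨?_, ?_, ?_, ?_, ?_⟩, ?_, ?_, ?_⟩
  · intro a b ha hab hb
    exact ha (J.lower hab hb)
  · intro a b ha hb hab
    rcases hJprime.mem_or_mem hab with h | h
    exacts [ha h, hb h]
  · exact hFJ (show (⊤ : A) ∈ F from by rw [hFmem, hp2]; exact hUtop)
  · simp [J.bot_mem]
  · intro a b hab
    by_contra h
    push_neg at h
    obtain ⟨ha, hb⟩ := h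
    simp only [Set.mem_compl_iff, not_not] at ha hb
    exact hab (J.sup_mem ha hb)
  · intro c hc
    by_contra hcv
    exact hc (hIJ (show c ∈ Is from ⟨⊥, c, by rw [hm2]; exact hUtop, hcv, by simp⟩))
  · intro a ha
    exact hFJ (show a ∈ F from ha)
  · intro a ha hane
    exact hane (hIJ (show a ∈ Is from ⟨a, ⊥, ha, hVbot, by simp⟩))
end

section
/- Let A be a bounded distributive lattice with ♦ : A → A satisfying ♦(a ⊔ b) = ♦a ⊔ ♦b and ♦⊥ = ⊥, and □₋ : A → A satisfying □₋(a ⊔ b) = □₋a ⊓ □₋b and □₋⊥ = ⊤, such that for all a, c ∈ A: ♦a ≤ □₋a ⊔ c implies ♦a ≤ c. Let U, V be prime filters of A such that ♦a ∈ U for all a ∈ V. Then there exists a prime filter U' with U' ⊆ U such that ♦a ∈ U' for all a ∈ V, and □₋a ∈ U' implies a ∉ V for all a. -/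
theorem stmt11 {A : Type*} [DistribLattice A] [BoundedOrder A]
    (dia boxm : A → A)
    (hd1 : ∀ a b : A, dia (a ⊔ b) = dia a ⊔ dia b) (hd2 : dia ⊥ = ⊥)
    (hm1 : ∀ a b : A, boxm (a ⊔ b) = boxm a ⊓ boxm b) (hm2 : boxm ⊥ = ⊤)
    (hax : ∀ a c : A, dia a ≤ boxm a ⊔ c → dia a ≤ c)
    (U V : Set A) (hU : IsPrimeFilter U) (hV : IsPrimeFilter V)
    (hUV : ∀ a : A, a ∈ V → dia a ∈ U) :
    ∃ U' : Set A, IsPrimeFilter U' ∧ U' ⊆ U ∧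
      (∀ a : A, a ∈ V → dia a ∈ U') ∧ (∀ a : A, boxm a ∈ U' → a ∉ V) := by
  obtain ⟨hUup, hUmeet, hUtop, hUbot, hUprime⟩ := hU
  obtain ⟨hVup, hVmeet, hVtop, hVbot, hVprime⟩ := hV
  -- dia is monotone, boxm is antitone
  have hdmono : ∀ a b : A, a ≤ b → dia a ≤ dia b := by
    intro a b hab
    have : dia (a ⊔ b) = dia a ⊔ dia b := hd1 a b
    rw [sup_eq_right.mpr hab] at this
    rw [this]; exact le_sup_left
  have hmanti : ∀ a b : A, a ≤ b → boxm b ≤ boxm a := by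
    intro a b hab
    have : boxm (a ⊔ b) = boxm a ⊓ boxm b := hm1 a b
    rw [sup_eq_right.mpr hab] at this
    rw [this]; exact inf_le_left
  -- the filter F
  set Fs : Set A := {x | ∃ v ∈ V, dia v ≤ x} with hFs
  have hFpf : Order.IsPFilter Fs := by
    apply Order.IsPFilter.of_def
    · exact ⟨⊤, ⊤, hVtop, le_top⟩
    · rintro x ⟨v, hv, hvx⟩ y ⟨w, hw, hwy⟩
      refine ⟨x ⊓ y, ⟨v ⊓ w, hVmeet v w hv hw, ?_⟩, inf_le_left, inf_le_right⟩
      exact le_inf (le_trans (hdmono _ _ inf_le_left) hvx)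
        (le_trans (hdmono _ _ inf_le_right) hwy)
    · rintro x y hxy ⟨v, hv, hvx⟩; exact ⟨v, hv, hvx.trans hxy⟩
  -- the ideal I
  set Is : Set A := {x | ∃ u ∉ U, ∃ v ∈ V, x ≤ u ⊔ boxm v} with hIs
  have hIid : Order.IsIdeal Is := by
    constructor
    · rintro x y hxy ⟨u, hu, v, hv, hle⟩; exact ⟨u, hu, v, hv, hxy.trans hle⟩
    · exact ⟨⊥, ⊥, hUbot, ⊤, hVtop, bot_le⟩
    · rintro x ⟨u, hu, v, hv, hx⟩ y ⟨u', hu', w, hw, hy⟩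
      refine ⟨x ⊔ y, ⟨u ⊔ u', ?_, v ⊓ w, hVmeet v w hv hw, ?_⟩, le_sup_left, le_sup_right⟩
      · intro h; rcases hUprime u u' h with h | h
        · exact hu h
        · exact hu' h
      · apply sup_le
        · exact hx.trans (sup_le_sup le_sup_left (hmanti _ _ inf_le_left))
        · exact hy.trans (sup_le_sup le_sup_right (hmanti _ _ inf_le_right))
  -- disjointness
  have hdisj : Disjoint ((hFpf.toPFilter : Order.PFilter A) : Set A) ((hIid.toIdeal : Order.Ideal A) : Set A) := by
    rw [Set.disjoint_left]
    rintro x ⟨v, hv, hvx⟩ ⟨u, hu, w, hw, hxu⟩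
    have h1 : dia (v ⊓ w) ≤ boxm (v ⊓ w) ⊔ u := by
      calc dia (v ⊓ w) ≤ dia v := hdmono _ _ inf_le_left
        _ ≤ x := hvx
        _ ≤ u ⊔ boxm w := hxu
        _ ≤ boxm (v ⊓ w) ⊔ u := by
            rw [sup_comm]; exact sup_le_sup (hmanti _ _ inf_le_right) le_rfl
    have h2 : dia (v ⊓ w) ≤ u := hax _ _ h1
    exact hu (hUup _ _ (hUV _ (hVmeet v w hv hw)) h2)
  obtain ⟨J, hJprime, hIJ, hJF⟩ :=
    DistribLattice.prime_ideal_of_disjoint_filter_ideal hdisj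
  refine ⟨(J : Set A)ᶜ, ?_, ?_, ?_, ?_⟩
  · -- complement of prime ideal is a prime filter
    refine ⟨?_, ?_, ?_, ?_, ?_⟩
    · intro a b ha hab hb
      exact ha (J.lower hab hb)
    · intro a b ha hb hab
      rcases (Order.Ideal.IsPrime.mem_or_mem hJprime hab) with h | h
      · exact ha h
      · exact hb h
    · exact hJprime.toIsProper.top_notMem
    · simp only [Set.mem_compl_iff, not_not]
      exact J.bot_mem
    · intro a b hab
      by_contra h
      push_neg at h
      obtain ⟨ha, hb⟩ := h
      simp only [Set.mem_compl_iff, not_not] at ha hb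
      exact hab (J.sup_mem ha hb)
  · -- U' ⊆ U
    intro x hx
    by_contra hxU
    exact hx (hIJ ⟨x, hxU, ⊤, hVtop, le_sup_left⟩)
  · -- dia a ∈ U' for a ∈ V
    intro a ha
    have : dia a ∈ ((hFpf.toPFilter : Order.PFilter A) : Set A) := ⟨a, ha, le_rfl⟩
    exact Set.disjoint_left.mp hJF this
  · -- boxm a ∈ U' → a ∉ V
    intro a ha haV
    exact ha (hIJ ⟨⊥, hUbot, a, haV, le_sup_right⟩)
end

section
/- Let A be a bounded distributive lattice with □ : A → A satisfying □(a ⊓ b) = □a ⊓ □b and □⊤ = ⊤, and ♦ : A → A satisfying ♦(a ⊔ b) = ♦a ⊔ ♦b and ♦⊥ = ⊥, such that for all a, b, c ∈ A: ♦a ≤ □b ⊔ c implies ♦a ≤ ♦(a ⊓ b) ⊔ c. Let U, V be prime filters of A such that ♦a ∈ U for all a ∈ V. Then there exist prime filters U' and V' with U' ⊆ U and V ⊆ V' such that ♦a ∈ U' for all a ∈ V', and □a ∈ U' implies a ∈ V' for all a. -/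
theorem stmt12 {A : Type*} [DistribLattice A] [BoundedOrder A]
    (box dia : A → A)
    (hb1 : ∀ a b : A, box (a ⊓ b) = box a ⊓ box b) (hb2 : box ⊤ = ⊤)
    (hd1 : ∀ a b : A, dia (a ⊔ b) = dia a ⊔ dia b) (hd2 : dia ⊥ = ⊥)
    (hax : ∀ a b c : A, dia a ≤ box b ⊔ c → dia a ≤ dia (a ⊓ b) ⊔ c)
    (U V : Set A) (hU : IsPrimeFilter U) (hV : IsPrimeFilter V)
    (hUV : ∀ a : A, a ∈ V → dia a ∈ U) :
    ∃ U' V' : Set A, IsPrimeFilter U' ∧ IsPrimeFilter V' ∧ U' ⊆ U ∧ V ⊆ V' ∧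
      (∀ a : A, a ∈ V' → dia a ∈ U') ∧ (∀ a : A, box a ∈ U' → a ∈ V') := by
  obtain ⟨hUup, hUmeet, hUtop, hUbot, hUprime⟩ := hU
  obtain ⟨hVup, hVmeet, hVtop, hVbot, hVprime⟩ := hV
  -- diamond is monotone
  have hmono : ∀ a b : A, a ≤ b → dia a ≤ dia b := by
    intro a b h
    calc dia a ≤ dia a ⊔ dia b := le_sup_left
      _ = dia (a ⊔ b) := (hd1 a b).symm
      _ = dia b := by rw [sup_eq_right.mpr h]
  -- complement of U is closed under joins
  have hUj : ∀ c₁ c₂ : A, c₁ ∉ U → c₂ ∉ U → c₁ ⊔ c₂ ∉ U := by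
    intro c₁ c₂ h1 h2 h
    rcases hUprime c₁ c₂ h with h | h
    · exact h1 h
    · exact h2 h
  -- Step 1: maximal filter V' ⊇ V with dia[V'] ⊆ U
  set S₁ : Set (Set A) := {F | V ⊆ F ∧ (∀ a b : A, a ∈ F → a ≤ b → b ∈ F) ∧
      (∀ a b : A, a ∈ F → b ∈ F → a ⊓ b ∈ F) ∧ ∀ a ∈ F, dia a ∈ U} with hS₁
  obtain ⟨V', hVV', hV'mem, hV'max⟩ : ∃ V', V ⊆ V' ∧ V' ∈ S₁ ∧ ∀ F ∈ S₁, V' ⊆ F → F = V' := by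
    have hch : ∀ c ⊆ S₁, IsChain (· ⊆ ·) c → c.Nonempty → ∃ ub ∈ S₁, ∀ s ∈ c, s ⊆ ub := by
      intro c hc hchain hne
      refine ⟨⋃₀ c, ⟨?_, ?_, ?_, ?_⟩, fun s hs => Set.subset_sUnion_of_mem hs⟩
      · obtain ⟨t, ht⟩ := hne
        exact fun x hx => Set.mem_sUnion.mpr ⟨t, ht, (hc ht).1 hx⟩
      · rintro a b ⟨t, ht, hat⟩ hab
        exact ⟨t, ht, (hc ht).2.1 a b hat hab⟩
      · rintro a b ⟨t, ht, hat⟩ ⟨s, hs, hbs⟩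
        rcases hchain.total ht hs with h | h
        · exact ⟨s, hs, (hc hs).2.2.1 a b (h hat) hbs⟩
        · exact ⟨t, ht, (hc ht).2.2.1 a b hat (h hbs)⟩
      · rintro a ⟨t, ht, hat⟩
        exact (hc ht).2.2.2 a hat
    obtain ⟨m, hm1, hm2⟩ := zorn_subset_nonempty S₁ hch V ⟨Set.Subset.rfl, hVup, hVmeet, hUV⟩
    exact ⟨m, hm1, hm2.1, fun F hF hmF => hm2.eq_of_ge hF hmF⟩
  obtain ⟨hV'V, hV'up, hV'meet, hV'dia⟩ := hV'mem
  have hV'top : (⊤ : A) ∈ V' := hV'V hVtop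
  have hV'bot : (⊥ : A) ∉ V' := fun h => hUbot (hd2 ▸ hV'dia ⊥ h)
  -- key consequence of maximality
  have hae : ∀ a : A, a ∉ V' → ∃ v ∈ V', dia (v ⊓ a) ∉ U := by
    intro a ha
    by_contra h
    push_neg at h
    have hF : {x : A | ∃ v ∈ V', v ⊓ a ≤ x} ∈ S₁ := by
      refine ⟨fun x hx => ⟨x, hV'V hx, inf_le_left⟩, ?_, ?_, ?_⟩
      · rintro x y ⟨v, hv, hvx⟩ hxy
        exact ⟨v, hv, hvx.trans hxy⟩
      · rintro x y ⟨v, hv, hvx⟩ ⟨w, hw, hwy⟩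
        refine ⟨v ⊓ w, hV'meet v w hv hw, le_inf ?_ ?_⟩
        · exact le_trans (inf_le_inf_right a inf_le_left) hvx
        · exact le_trans (inf_le_inf_right a inf_le_right) hwy
      · rintro x ⟨v, hv, hvx⟩
        exact hUup _ _ (h v hv) (hmono _ _ hvx)
    have := hV'max _ hF (fun x hx => ⟨x, hx, inf_le_left⟩)
    exact ha (this ▸ ⟨⊤, hV'top, by simp⟩)
  -- V' is prime
  have hV'prime : ∀ a b : A, a ⊔ b ∈ V' → a ∈ V' ∨ b ∈ V' := by
    intro a b hab
    by_contra h
    push_neg at h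
    obtain ⟨v₁, hv₁, hd₁⟩ := hae a h.1
    obtain ⟨v₂, hv₂, hd₂⟩ := hae b h.2
    set v := v₁ ⊓ v₂ with hv
    have hvV : v ∈ V' := hV'meet _ _ hv₁ hv₂
    have h1 : dia (v ⊓ a) ∉ U := fun hh =>
      hd₁ (hUup _ _ hh (hmono _ _ (inf_le_inf_right a inf_le_left)))
    have h2 : dia (v ⊓ b) ∉ U := fun hh =>
      hd₂ (hUup _ _ hh (hmono _ _ (inf_le_inf_right b inf_le_right)))
    have hin : dia (v ⊓ (a ⊔ b)) ∈ U := hV'dia _ (hV'meet _ _ hvV hab)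
    rw [inf_sup_left, hd1] at hin
    exact hUj _ _ h1 h2 hin
  -- fold lemmas
  have base_le : ∀ (l : List A) (c : A), c ≤ (l.map box).foldr (· ⊔ ·) c := by
    intro l
    induction l with
    | nil => intro c; simp
    | cons a l ih => intro c; simpa using le_sup_of_le_right (ih c)
  have fold_mono : ∀ (l : List A) (c c' : A), c ≤ c' →
      (l.map box).foldr (· ⊔ ·) c ≤ (l.map box).foldr (· ⊔ ·) c' := by
    intro l
    induction l with
    | nil => intro c c' h; simpa using h
    | cons a l ih => intro c c' h; simpa using sup_le_sup_left (ih c c' h) _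
  have fold_comm : ∀ (l : List A) (d c : A),
      d ⊔ (l.map box).foldr (· ⊔ ·) c = (l.map box).foldr (· ⊔ ·) (d ⊔ c) := by
    intro l
    induction l with
    | nil => intro d c; simp
    | cons a l ih => intro d c; simp only [List.map_cons, List.foldr_cons, ← ih d c]; ac_rfl
  -- key separation lemma
  have key : ∀ (l : List A), (∀ a ∈ l, a ∉ V') → ∀ c, c ∉ U → ∀ v, v ∈ V' →
      ¬ dia v ≤ (l.map box).foldr (· ⊔ ·) c := by
    intro l
    induction l with
    | nil =>
      intro _ c hc v hv hle
      exact hc (hUup _ _ (hV'dia v hv) (by simpa using hle))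
    | cons a l ih =>
      intro hl c hc v hv hle
      obtain ⟨w, hw, hdw⟩ := hae a (hl a List.mem_cons_self)
      set v' := v ⊓ w with hv'
      have hv'V : v' ∈ V' := hV'meet _ _ hv hw
      have hle' : dia v' ≤ box a ⊔ (l.map box).foldr (· ⊔ ·) c :=
        le_trans (hmono _ _ inf_le_left) (by simpa using hle)
      have hle'' := hax v' a _ hle'
      rw [fold_comm] at hle''
      have hnc : dia (v' ⊓ a) ⊔ c ∉ U := by
        refine hUj _ _ (fun hh => hdw (hUup _ _ hh ?_)) hc
        exact hmono _ _ (inf_le_inf_right a inf_le_right)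
      exact ih (fun x hx => hl x (List.mem_cons_of_mem a hx)) _ hnc v' hv'V hle''
  -- the ideal J
  set J : Set A := {x | ∃ (l : List A) (c : A), (∀ a ∈ l, a ∉ V') ∧ c ∉ U ∧
      x ≤ (l.map box).foldr (· ⊔ ·) c} with hJ
  have hJdown : ∀ x y : A, y ∈ J → x ≤ y → x ∈ J := by
    rintro x y ⟨l, c, h1, h2, h3⟩ hxy
    exact ⟨l, c, h1, h2, hxy.trans h3⟩
  have hJjoin : ∀ x y : A, x ∈ J → y ∈ J → x ⊔ y ∈ J := by
    rintro x y ⟨l₁, c₁, h1, h2, h3⟩ ⟨l₂, c₂, g1, g2, g3⟩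
    refine ⟨l₁ ++ l₂, c₁ ⊔ c₂, ?_, hUj _ _ h2 g2, ?_⟩
    · intro a ha
      rcases List.mem_append.mp ha with h | h
      · exact h1 a h
      · exact g1 a h
    · rw [List.map_append, List.foldr_append]
      refine sup_le ?_ ?_
      · exact h3.trans (fold_mono _ _ _ ((le_sup_left : c₁ ≤ c₁ ⊔ c₂).trans (base_le l₂ _)))
      · exact g3.trans ((fold_mono l₂ c₂ _ le_sup_right).trans (base_le l₁ _))
  -- the filter G generated by dia[V']
  set G : Set A := {x | ∃ v ∈ V', dia v ≤ x} with hG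
  have hGJ : ∀ x ∈ G, x ∉ J := by
    rintro x ⟨v, hv, hvx⟩ ⟨l, c, h1, h2, h3⟩
    exact key l h1 c h2 v hv (hvx.trans h3)
  -- Step 2: maximal filter U' ⊇ G disjoint from J
  set S₂ : Set (Set A) := {F | G ⊆ F ∧ (∀ a b : A, a ∈ F → a ≤ b → b ∈ F) ∧
      (∀ a b : A, a ∈ F → b ∈ F → a ⊓ b ∈ F) ∧ ∀ x ∈ F, x ∉ J} with hS₂
  obtain ⟨U', hGU', hU'mem, hU'max⟩ : ∃ U', G ⊆ U' ∧ U' ∈ S₂ ∧ ∀ F ∈ S₂, U' ⊆ F → F = U' := by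
    have hch : ∀ c ⊆ S₂, IsChain (· ⊆ ·) c → c.Nonempty → ∃ ub ∈ S₂, ∀ s ∈ c, s ⊆ ub := by
      intro c hc hchain hne
      refine ⟨⋃₀ c, ⟨?_, ?_, ?_, ?_⟩, fun s hs => Set.subset_sUnion_of_mem hs⟩
      · obtain ⟨t, ht⟩ := hne
        exact fun x hx => Set.mem_sUnion.mpr ⟨t, ht, (hc ht).1 hx⟩
      · rintro a b ⟨t, ht, hat⟩ hab
        exact ⟨t, ht, (hc ht).2.1 a b hat hab⟩
      · rintro a b ⟨t, ht, hat⟩ ⟨s, hs, hbs⟩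
        rcases hchain.total ht hs with h | h
        · exact ⟨s, hs, (hc hs).2.2.1 a b (h hat) hbs⟩
        · exact ⟨t, ht, (hc ht).2.2.1 a b hat (h hbs)⟩
      · rintro a ⟨t, ht, hat⟩
        exact (hc ht).2.2.2 a hat
    have hGS : G ∈ S₂ := by
      refine ⟨Set.Subset.rfl, ?_, ?_, hGJ⟩
      · rintro a b ⟨v, hv, hva⟩ hab
        exact ⟨v, hv, hva.trans hab⟩
      · rintro a b ⟨v, hv, hva⟩ ⟨w, hw, hwb⟩
        refine ⟨v ⊓ w, hV'meet _ _ hv hw, le_inf ?_ ?_⟩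
        · exact (hmono _ _ inf_le_left).trans hva
        · exact (hmono _ _ inf_le_right).trans hwb
    obtain ⟨m, hm1, hm2⟩ := zorn_subset_nonempty S₂ hch G hGS
    exact ⟨m, hm1, hm2.1, fun F hF hmF => hm2.eq_of_ge hF hmF⟩
  obtain ⟨_, hU'up, hU'meet, hU'J⟩ := hU'mem
  have hU'top : (⊤ : A) ∈ U' := hGU' ⟨⊤, hV'top, le_top⟩
  have hU'bot : (⊥ : A) ∉ U' := fun h => hU'J ⊥ h ⟨[], ⊥, by simp, hUbot, by simp⟩
  have hU'sub : U' ⊆ U := by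
    intro x hx
    by_contra hxU
    exact hU'J x hx ⟨[], x, by simp, hxU, by simp⟩
  -- U' is prime
  have hU'prime : ∀ a b : A, a ⊔ b ∈ U' → a ∈ U' ∨ b ∈ U' := by
    intro a b hab
    by_contra h
    push_neg at h
    have step : ∀ y : A, y ∉ U' → ∃ f ∈ U', f ⊓ y ∈ J := by
      intro y hy
      by_contra hstep
      push_neg at hstep
      have hF : {x : A | ∃ f ∈ U', f ⊓ y ≤ x} ∈ S₂ := by
        refine ⟨fun x hx => ⟨x, hGU' hx, inf_le_left⟩, ?_, ?_, ?_⟩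
        · rintro p q ⟨f, hf, hfp⟩ hpq
          exact ⟨f, hf, hfp.trans hpq⟩
        · rintro p q ⟨f, hf, hfp⟩ ⟨g, hg, hgq⟩
          refine ⟨f ⊓ g, hU'meet _ _ hf hg, le_inf ?_ ?_⟩
          · exact le_trans (inf_le_inf_right y inf_le_left) hfp
          · exact le_trans (inf_le_inf_right y inf_le_right) hgq
        · rintro x ⟨f, hf, hfx⟩ hxJ
          exact hstep f hf (hJdown _ _ hxJ hfx)
      have := hU'max _ hF (fun x hx => ⟨x, hx, inf_le_left⟩)
      exact hy (this ▸ ⟨⊤, hU'top, by simp⟩)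
    obtain ⟨f₁, hf₁, hj₁⟩ := step a h.1
    obtain ⟨f₂, hf₂, hj₂⟩ := step b h.2
    set f := f₁ ⊓ f₂ with hf
    have hfU : f ∈ U' := hU'meet _ _ hf₁ hf₂
    have j1 : f ⊓ a ∈ J := hJdown _ _ hj₁ (inf_le_inf_right a inf_le_left)
    have j2 : f ⊓ b ∈ J := hJdown _ _ hj₂ (inf_le_inf_right b inf_le_right)
    have : f ⊓ (a ⊔ b) ∈ J := by
      rw [inf_sup_left]
      exact hJjoin _ _ j1 j2
    exact hU'J _ (hU'meet _ _ hfU hab) this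
  -- box condition
  have hbox : ∀ a : A, box a ∈ U' → a ∈ V' := by
    intro a ha
    by_contra haV
    exact hU'J _ ha ⟨[a], ⊥, by simpa using haV, hUbot, by simp⟩
  exact ⟨U', V', ⟨hU'up, hU'meet, hU'top, hU'bot, hU'prime⟩,
    ⟨hV'up, hV'meet, hV'top, hV'bot, hV'prime⟩, hU'sub, hVV',
    fun a haV' => hGU' ⟨a, haV', le_rfl⟩, hbox⟩
end

section
/- Let (W,≤) be a poset and R an arbitrary binary relation on W. Define u R^♦ v iff there exist u' ≤ u and v' ≥ v with u' R v'. Then the following are equivalent: (i) whenever v ≤ u and v R w, there exists w' with u R w' and w ≤ w' (i.e. ≥ ∘ R ⊆ R ∘ ≥); (ii) for every upset a of W, {u : ∃v, u R^♦ v ∧ v ∈ a} = {u : ∃v, u R v ∧ v ∈ a}. -/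
theorem stmt13 {W : Type*} [PartialOrder W] (R : W → W → Prop) :
    (∀ v u w : W, v ≤ u → R v w → ∃ w', R u w' ∧ w ≤ w') ↔
    (∀ a : Set W, (∀ u v : W, u ∈ a → u ≤ v → v ∈ a) →
      {u : W | ∃ v, (∃ u' v', u' ≤ u ∧ v ≤ v' ∧ R u' v') ∧ v ∈ a} =
        {u : W | ∃ v, R u v ∧ v ∈ a}) := by
  constructor
  · intro h a ha
    ext u
    constructor
    · rintro ⟨v, ⟨u', v', hu', hv', hR⟩, hva⟩
      obtain ⟨w', hRw', hle⟩ := h u' u v' hu' hR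
      exact ⟨w', hRw', ha v w' hva (hv'.trans hle)⟩
    · rintro ⟨v, hR, hva⟩
      exact ⟨v, ⟨u, v, le_refl u, le_refl v, hR⟩, hva⟩
  · intro h v u w hvu hR
    have := h {x | w ≤ x} (fun a b hab hle => le_trans hab hle)
    have hu : u ∈ {u : W | ∃ v, (∃ u' v', u' ≤ u ∧ v ≤ v' ∧ R u' v') ∧ v ∈ {x | w ≤ x}} :=
      ⟨w, ⟨v, w, hvu, le_refl w, hR⟩, le_refl w⟩
    rw [this] at hu
    exact hu
end

section
/- Let A be a bounded distributive lattice with □ : A → A satisfying □(a ⊓ b) = □a ⊓ □b and □⊤ = ⊤, and ♦ : A → A satisfying ♦(a ⊔ b) = ♦a ⊔ ♦b and ♦⊥ = ⊥, such that □a ⊓ ♦b ≤ ♦(a ⊓ b) for all a, b ∈ A. Let U, V be prime filters of A such that ♦a ∈ U for all a ∈ V. Then there exists a prime filter W with V ⊆ W such that ♦a ∈ U for all a ∈ W, and □a ∈ U implies a ∈ W for all a. -/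
theorem stmt14 {A : Type*} [DistribLattice A] [BoundedOrder A]
    (box dia : A → A)
    (hb1 : ∀ a b : A, box (a ⊓ b) = box a ⊓ box b) (hb2 : box ⊤ = ⊤)
    (hd1 : ∀ a b : A, dia (a ⊔ b) = dia a ⊔ dia b) (hd2 : dia ⊥ = ⊥)
    (hax : ∀ a b : A, box a ⊓ dia b ≤ dia (a ⊓ b))
    (U V : Set A) (hU : IsPrimeFilter U) (hV : IsPrimeFilter V)
    (hUV : ∀ a : A, a ∈ V → dia a ∈ U) :
    ∃ W : Set A, IsPrimeFilter W ∧ V ⊆ W ∧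
      (∀ a : A, a ∈ W → dia a ∈ U) ∧ (∀ a : A, box a ∈ U → a ∈ W) := by
  obtain ⟨hUup, hUinf, hUtop, hUbot, hUprime⟩ := hU
  obtain ⟨hVup, hVinf, hVtop, hVbot, hVprime⟩ := hV
  have dia_mono : ∀ a b : A, a ≤ b → dia a ≤ dia b := by
    intro a b hab
    have : dia b = dia a ⊔ dia b := by rw [← hd1, sup_eq_right.mpr hab]
    rw [this]; exact le_sup_left
  -- The filter generated by V together with {a | box a ∈ U}
  set F' : Set A := {c | ∃ v ∈ V, ∃ b, box b ∈ U ∧ v ⊓ b ≤ c} with hF'def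
  have memF' : ∀ c ∈ F', dia c ∈ U := by
    rintro c ⟨v, hv, b, hb, hle⟩
    have h1 : box b ⊓ dia v ∈ U := hUinf _ _ hb (hUV v hv)
    have h2 : box b ⊓ dia v ≤ dia c :=
      le_trans (hax b v) (dia_mono _ _ (le_trans (le_of_eq (inf_comm b v)) hle))
    exact hUup _ _ h1 h2
  have hF' : Order.IsPFilter F' := by
    apply Order.IsPFilter.of_def
    · exact ⟨⊤, ⟨⊤, hVtop, ⊤, by rw [hb2]; exact hUtop, le_top⟩⟩
    · rintro x ⟨v1, hv1, b1, hb1', hle1⟩ y ⟨v2, hv2, b2, hb2', hle2⟩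
      refine ⟨x ⊓ y, ⟨v1 ⊓ v2, hVinf _ _ hv1 hv2, b1 ⊓ b2, ?_, ?_⟩, inf_le_left, inf_le_right⟩
      · rw [hb1]; exact hUinf _ _ hb1' hb2'
      · refine le_inf (le_trans ?_ hle1) (le_trans ?_ hle2)
        · exact inf_le_inf inf_le_left inf_le_left
        · exact inf_le_inf inf_le_right inf_le_right
    · rintro x y hxy ⟨v, hv, b, hb, hle⟩
      exact ⟨v, hv, b, hb, le_trans hle hxy⟩
  -- The ideal {a | dia a ∉ U}
  set I' : Set A := {a | dia a ∉ U} with hI'def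
  have hI' : Order.IsIdeal I' := by
    constructor
    · intro a b hab hb hcon
      exact hb (hUup _ _ hcon (dia_mono _ _ hab))
    · exact ⟨⊥, by simp only [hI'def, Set.mem_setOf_eq, hd2]; exact hUbot⟩
    · rintro x hx y hy
      refine ⟨x ⊔ y, ?_, le_sup_left, le_sup_right⟩
      intro hcon
      rw [hd1] at hcon
      rcases hUprime _ _ hcon with h | h
      · exact hx h
      · exact hy h
  have hdisj : Disjoint (↑hF'.toPFilter : Set A) (↑hI'.toIdeal : Set A) := by
    rw [Set.disjoint_left]
    intro c hc hcI
    exact hcI (memF' c hc)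
  obtain ⟨J, hJprime, hIJ, hJdisj⟩ :=
    DistribLattice.prime_ideal_of_disjoint_filter_ideal hdisj
  have hJd : ∀ c ∈ F', c ∉ (J : Set A) := by
    intro c hc hcJ
    exact Set.disjoint_left.mp hJdisj hc hcJ
  refine ⟨(↑J : Set A)ᶜ, ⟨?_, ?_, ?_, ?_, ?_⟩, ?_, ?_, ?_⟩
  · intro a b ha hab hb
    exact ha (J.lower hab hb)
  · intro a b ha hb hab
    rcases hJprime.mem_or_mem hab with h | h
    · exact ha h
    · exact hb h
  · exact hJd ⊤ ⟨⊤, hVtop, ⊤, by rw [hb2]; exact hUtop, le_top⟩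
  · intro h
    exact h (hIJ (show (⊥:A) ∈ I' by simp only [hI'def, Set.mem_setOf_eq, hd2]; exact hUbot))
  · intro a b hab
    by_contra hcon
    push_neg at hcon
    simp only [Set.mem_compl_iff, not_not] at hcon
    exact hab (J.sup_mem hcon.1 hcon.2)
  · intro v hv
    exact hJd v ⟨v, hv, ⊤, by rw [hb2]; exact hUtop, inf_le_left⟩
  · intro a ha
    by_contra h
    exact ha (hIJ h)
  · intro a ha
    exact hJd a ⟨⊤, hVtop, a, ha, inf_le_right⟩
end

section
/- Let A be a Heyting algebra with maps □, ◆, ♦, ■ : A → A such that ◆ is left adjoint to □ (◆a ≤ b iff a ≤ □b for all a, b) and ♦ is left adjoint to ■ (♦a ≤ b iff a ≤ ■b for all a, b). Then (■a ⊓ ◆b ≤ ◆(a ⊓ b) for all a, b ∈ A) if and only if ((♦a ⇨ □b) ≤ □(a ⇨ b) for all a, b ∈ A), where ⇨ is the Heyting implication. -/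
theorem stmt15 {A : Type*} [HeytingAlgebra A]
    (box bdia dia bbox : A → A)
    (adj1 : ∀ a b : A, bdia a ≤ b ↔ a ≤ box b)
    (adj2 : ∀ a b : A, dia a ≤ b ↔ a ≤ bbox b) :
    (∀ a b : A, bbox a ⊓ bdia b ≤ bdia (a ⊓ b)) ↔
    (∀ a b : A, (dia a ⇨ box b) ≤ box (a ⇨ b)) := by
  have unit1 : ∀ a : A, a ≤ box (bdia a) := fun a => (adj1 a (bdia a)).mp le_rfl
  have counit1 : ∀ a : A, bdia (box a) ≤ a := fun a => (adj1 (box a) a).mpr le_rfl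
  have unit2 : ∀ a : A, a ≤ bbox (dia a) := fun a => (adj2 a (dia a)).mp le_rfl
  have counit2 : ∀ a : A, dia (bbox a) ≤ a := fun a => (adj2 (bbox a) a).mpr le_rfl
  have bdia_mono : ∀ {a b : A}, a ≤ b → bdia a ≤ bdia b := by
    intro a b h
    exact (adj1 _ _).mpr (h.trans (unit1 b))
  constructor
  · intro h a b
    rw [← adj1, le_himp_iff, inf_comm]
    calc a ⊓ bdia (dia a ⇨ box b)
        ≤ bbox (dia a) ⊓ bdia (dia a ⇨ box b) := inf_le_inf_right _ (unit2 a)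
      _ ≤ bdia (dia a ⊓ (dia a ⇨ box b)) := h _ _
      _ ≤ bdia (box b) := bdia_mono (by simp [inf_himp_le])
      _ ≤ b := counit1 b
  · intro h a b
    rw [inf_comm, ← le_himp_iff, adj1]
    calc b ≤ a ⇨ box (bdia (a ⊓ b)) := le_himp_iff.mpr (by rw [inf_comm]; exact unit1 _)
      _ ≤ dia (bbox a) ⇨ box (bdia (a ⊓ b)) := himp_le_himp_right (counit2 a)
      _ ≤ box (bbox a ⇨ bdia (a ⊓ b)) := h _ _
end

section
/- Let A be a Heyting algebra with maps □₊, ◆, □₋, ■₋ : A → A such that ◆ is left adjoint to □₊ (◆a ≤ b iff a ≤ □₊b for all a, b) and □₋ and ■₋ form a contravariant Galois connection (a ≤ □₋b iff b ≤ ■₋a for all a, b). Then (■₋a ⊓ ◆a = ⊥ for all a ∈ A) if and only if (□₋a ≤ □₊(a ⇨ ⊥) for all a ∈ A), where ⇨ is the Heyting implication. -/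
theorem stmt16 {A : Type*} [HeytingAlgebra A]
    (boxp bdia boxm bsq : A → A)
    (adj : ∀ a b : A, bdia a ≤ b ↔ a ≤ boxp b)
    (gal : ∀ a b : A, a ≤ boxm b ↔ b ≤ bsq a) :
    (∀ a : A, bsq a ⊓ bdia a = ⊥) ↔ (∀ a : A, boxm a ≤ boxp (a ⇨ ⊥)) := by
  constructor
  · intro h a
    rw [← adj, le_himp_iff]
    have h1 : a ≤ bsq (boxm a) := (gal (boxm a) a).mp le_rfl
    calc bdia (boxm a) ⊓ a ≤ bdia (boxm a) ⊓ bsq (boxm a) :=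
          inf_le_inf_left _ h1
      _ = ⊥ := by rw [inf_comm, h]
  · intro h a
    have h1 : a ≤ boxm (bsq a) := (gal a (bsq a)).mpr le_rfl
    have h2 : bdia a ≤ bsq a ⇨ ⊥ := (adj a _).mpr (h1.trans (h _))
    refine le_bot_iff.mp ?_
    calc bsq a ⊓ bdia a ≤ bsq a ⊓ (bsq a ⇨ ⊥) := inf_le_inf_left _ h2
      _ ≤ ⊥ := inf_himp_le
end

section
/- Let (W,≤) be a poset, let R^♦ be a ♦₊-relation on W and R^□ a □₊-relation on W. Then the following are equivalent: (i) for all upsets a, b of W, □₊a ∩ ♦₊b ⊆ ♦₊(a ∩ b), where ♦₊x := {u : ∃v, u R^♦ v ∧ v ∈ x} and □₊x := {u : ∀v, u R^□ v → v ∈ x}; (ii) for all u, v with u R^♦ v there exists v' with v ≤ v', u R^♦ v' and u R^□ v'. -/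
theorem stmt17 {W : Type*} [PartialOrder W] (Rd Rb : W → W → Prop)
    (hd : ∀ u v u' v' : W, Rd u v → u ≤ u' → v' ≤ v → Rd u' v')
    (hb : ∀ u v u' v' : W, Rb u v → u' ≤ u → v ≤ v' → Rb u' v') :
    (∀ a b : Set W, (∀ u v : W, u ∈ a → u ≤ v → v ∈ a) → (∀ u v : W, u ∈ b → u ≤ v → v ∈ b) →
      {u : W | ∀ v, Rb u v → v ∈ a} ∩ {u : W | ∃ v, Rd u v ∧ v ∈ b} ⊆
        {u : W | ∃ v, Rd u v ∧ v ∈ a ∩ b}) ↔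
    (∀ u v : W, Rd u v → ∃ v', v ≤ v' ∧ Rd u v' ∧ Rb u v') := by
  constructor
  · intro h u v huv
    have := h {w | Rb u w} {w | v ≤ w}
      (fun x y hx hxy => hb u x u y hx le_rfl hxy)
      (fun x y hx hxy => le_trans hx hxy) ⟨fun w hw => hw, ⟨v, huv, le_rfl⟩⟩
    obtain ⟨v', hdv', hbv', hle⟩ := this
    exact ⟨v', hle, hdv', hbv'⟩
  · intro h a b ha hb' u ⟨hua, v, hdv, hvb⟩
    obtain ⟨v', hle, hd', hb''⟩ := h u v hdv
    exact ⟨v', hd', hua v' hb'', hb' v v' hvb hle⟩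
end

section
/- Let A be a Heyting algebra with □ : A → A satisfying □(a ⊓ b) = □a ⊓ □b and □⊤ = ⊤, and ♦ : A → A satisfying ♦(a ⊔ b) = ♦a ⊔ ♦b and ♦⊥ = ⊥, such that (♦a ⇨ □b) ≤ □(a ⇨ b) for all a, b ∈ A, where ⇨ is the Heyting implication. Let U, V be prime filters of A such that □a ∈ U implies a ∈ V for all a. Then there exists a prime filter W with U ⊆ W such that □a ∈ W implies a ∈ V for all a, and ♦a ∈ W for all a ∈ V. -/
theorem stmt18 {A : Type*} [HeytingAlgebra A]
    (box dia : A → A)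
    (hb1 : ∀ a b : A, box (a ⊓ b) = box a ⊓ box b) (hb2 : box ⊤ = ⊤)
    (hd1 : ∀ a b : A, dia (a ⊔ b) = dia a ⊔ dia b) (hd2 : dia ⊥ = ⊥)
    (hax : ∀ a b : A, (dia a ⇨ box b) ≤ box (a ⇨ b))
    (U V : Set A) (hU : IsPrimeFilter U) (hV : IsPrimeFilter V)
    (hUV : ∀ a : A, box a ∈ U → a ∈ V) :
    ∃ W : Set A, IsPrimeFilter W ∧ U ⊆ W ∧
      (∀ a : A, box a ∈ W → a ∈ V) ∧ (∀ a : A, a ∈ V → dia a ∈ W) := by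
  obtain ⟨hUup, hUmeet, hUtop, hUbot, hUprime⟩ := hU
  obtain ⟨hVup, hVmeet, hVtop, hVbot, hVprime⟩ := hV
  have diamono : ∀ a b : A, a ≤ b → dia a ≤ dia b := by
    intro a b hab
    have : dia (a ⊔ b) = dia b := by rw [sup_eq_right.2 hab]
    rw [hd1] at this
    exact le_sup_left.trans this.le
  have boxmono : ∀ a b : A, a ≤ b → box a ≤ box b := by
    intro a b hab
    have : box (a ⊓ b) = box a := by rw [inf_eq_left.2 hab]
    rw [hb1] at this
    exact this.ge.trans inf_le_right
  -- the filter F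
  set Fset : Set A := {x | ∃ u ∈ U, ∃ a ∈ V, u ⊓ dia a ≤ x} with hFset
  -- the ideal I
  set Iset : Set A := {x | ∃ b : A, b ∉ V ∧ x ≤ box b} with hIset
  have hFU : U ⊆ Fset := fun u hu => ⟨u, hu, ⊤, hVtop, inf_le_left⟩
  have hFdia : ∀ a ∈ V, dia a ∈ Fset := fun a ha => ⟨⊤, hUtop, a, ha, inf_le_right⟩
  have hFpf : Order.IsPFilter Fset := by
    refine Order.IsPFilter.of_def ⟨⊤, hFU hUtop⟩ ?_ ?_
    · rintro x ⟨u₁, hu₁, a₁, ha₁, h₁⟩ y ⟨u₂, hu₂, a₂, ha₂, h₂⟩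
      refine ⟨x ⊓ y, ⟨u₁ ⊓ u₂, hUmeet _ _ hu₁ hu₂, a₁ ⊓ a₂, hVmeet _ _ ha₁ ha₂, ?_⟩,
        inf_le_left, inf_le_right⟩
      refine le_inf (le_trans ?_ h₁) (le_trans ?_ h₂)
      · exact inf_le_inf inf_le_left (diamono _ _ inf_le_left)
      · exact inf_le_inf inf_le_right (diamono _ _ inf_le_right)
    · rintro x y hxy ⟨u, hu, a, ha, hle⟩
      exact ⟨u, hu, a, ha, hle.trans hxy⟩
  let F : Order.PFilter A := hFpf.toPFilter
  let I : Order.Ideal A :=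
    { carrier := Iset
      lower' := by
        rintro x y hxy ⟨b, hb, hle⟩
        exact ⟨b, hb, hxy.trans hle⟩
      nonempty' := ⟨box ⊥, ⊥, hVbot, le_rfl⟩
      directed' := by
        rintro x ⟨b₁, hb₁, h₁⟩ y ⟨b₂, hb₂, h₂⟩
        refine ⟨x ⊔ y, ⟨b₁ ⊔ b₂, fun h => ?_, sup_le (h₁.trans (boxmono _ _ le_sup_left))
          (h₂.trans (boxmono _ _ le_sup_right))⟩, le_sup_left, le_sup_right⟩
        rcases hVprime _ _ h with h | h
        exacts [hb₁ h, hb₂ h] }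
  have hFmem : (F : Set A) = Fset := rfl
  have hdisj : Disjoint (F : Set A) (I : Set A) := by
    rw [Set.disjoint_left, hFmem]
    rintro x ⟨u, hu, a, ha, hle⟩ ⟨b, hb, hle'⟩
    have h1 : u ⊓ dia a ≤ box b := hle.trans hle'
    have h2 : u ≤ dia a ⇨ box b := le_himp_iff.2 h1
    have h3 : box (a ⇨ b) ∈ U := hUup _ _ hu (h2.trans (hax a b))
    have h4 : a ⇨ b ∈ V := hUV _ h3
    have h5 : (a ⇨ b) ⊓ a ∈ V := hVmeet _ _ h4 ha
    exact hb (hVup _ _ h5 (by rw [inf_comm]; exact inf_himp_le))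
  obtain ⟨J, hJprime, hIJ, hJF⟩ := DistribLattice.prime_ideal_of_disjoint_filter_ideal hdisj
  refine ⟨(J : Set A)ᶜ, ⟨?_, ?_, ?_, ?_, ?_⟩, ?_, ?_, ?_⟩
  · intro a b ha hab hb
    exact ha (J.lower hab hb)
  · intro a b ha hb hab
    rcases (Order.Ideal.IsPrime.mem_or_mem hJprime hab) with h | h
    exacts [ha h, hb h]
  · exact fun h => Set.disjoint_left.1 hJF (hFU hUtop) h
  · exact not_not_intro J.bot_mem
  · intro a b hab
    by_contra h
    push_neg at h
    exact hab (J.sup_mem (not_not.1 h.1) (not_not.1 h.2))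
  · intro u hu hmem
    exact Set.disjoint_left.1 hJF (hFU hu) hmem
  · intro a ha
    by_contra hb
    exact ha (hIJ ⟨a, hb, le_rfl⟩)
  · intro a ha hmem
    exact Set.disjoint_left.1 hJF (hFdia a ha) hmem
end

section
/- Let A be a bounded distributive lattice with □ : A → A satisfying □(a ⊓ b) = □a ⊓ □b and □⊤ = ⊤, and ♦ : A → A satisfying ♦(a ⊔ b) = ♦a ⊔ ♦b and ♦⊥ = ⊥. Then the following are equivalent: (i) □a ⊓ ♦b ≤ ♦(a ⊓ b) and □(a ⊔ b) ≤ □a ⊔ ♦b for all a, b ∈ A (i.e. A is a positive modal algebra); (ii) there exist a Boolean algebra B, a map g : B → B with g(x ⊓ y) = g x ⊓ g y and g ⊤ = ⊤, and an injective map f : A → B with f(a ⊓ b) = f a ⊓ f b, f(a ⊔ b) = f a ⊔ f b, f ⊤ = ⊤, f ⊥ = ⊥, f(□a) = g(f a), and f(♦a) = (g((f a)ᶜ))ᶜ for all a, b ∈ A, where ᶜ is Boolean complement. -/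
universe u

section Aux

variable {A : Type u} [DistribLattice A] [BoundedOrder A]

/-- Prime filter predicate on a bounded distributive lattice. -/
def IsPF (F : Set A) : Prop :=
  (⊤ : A) ∈ F ∧ (⊥ : A) ∉ F ∧
  (∀ x y : A, x ∈ F → x ≤ y → y ∈ F) ∧
  (∀ x y : A, x ∈ F → y ∈ F → x ⊓ y ∈ F) ∧
  (∀ x y : A, x ⊔ y ∈ F → x ∈ F ∨ y ∈ F)

/-- Prime filter separation theorem (Stone / Birkhoff). -/
theorem prime_separation (F I : Set A)
    (hFup : ∀ x y : A, x ∈ F → x ≤ y → y ∈ F)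
    (hFmeet : ∀ x y : A, x ∈ F → y ∈ F → x ⊓ y ∈ F)
    (hFne : F.Nonempty)
    (hIdown : ∀ x y : A, x ∈ I → y ≤ x → y ∈ I)
    (hIjoin : ∀ x y : A, x ∈ I → y ∈ I → x ⊔ y ∈ I)
    (hIne : I.Nonempty)
    (hdis : ∀ x, x ∈ F → x ∉ I) :
    ∃ G : Set A, IsPF G ∧ F ⊆ G ∧ ∀ x ∈ G, x ∉ I := by
  have htopF : (⊤ : A) ∈ F := by
    obtain ⟨x, hx⟩ := hFne; exact hFup x ⊤ hx le_top
  have hbotI : (⊥ : A) ∈ I := by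
    obtain ⟨x, hx⟩ := hIne; exact hIdown x ⊥ hx bot_le
  -- Zorn on ideals containing I and disjoint from F
  set S : Set (Set A) := {M | I ⊆ M ∧ (∀ x y : A, x ∈ M → y ≤ x → y ∈ M) ∧
    (∀ x y : A, x ∈ M → y ∈ M → x ⊔ y ∈ M) ∧ ∀ x ∈ M, x ∉ F} with hS
  obtain ⟨M, hIM, hMS, hMmax⟩ := zorn_subset_nonempty S (by
    intro c hcS hchain hcne
    refine ⟨⋃₀ c, ⟨?_, ?_, ?_, ?_⟩, fun s hs => Set.subset_sUnion_of_mem hs⟩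
    · obtain ⟨s, hs⟩ := hcne
      exact fun x hx => Set.mem_sUnion.2 ⟨s, hs, (hcS hs).1 hx⟩
    · rintro x y ⟨s, hs, hxs⟩ hyx
      exact ⟨s, hs, (hcS hs).2.1 x y hxs hyx⟩
    · rintro x y ⟨s, hs, hxs⟩ ⟨t, ht, hyt⟩
      rcases hchain.total hs ht with hst | hts
      · exact ⟨t, ht, (hcS ht).2.2.1 x y (hst hxs) hyt⟩
      · exact ⟨s, hs, (hcS hs).2.2.1 x y hxs (hts hyt)⟩
    · rintro x ⟨s, hs, hxs⟩
      exact (hcS hs).2.2.2 x hxs) I ⟨le_refl I, hIdown, hIjoin, fun x hx => fun hxF => hdis x hxF hx⟩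
  obtain ⟨hIM', hMdown, hMjoin, hMF⟩ := hMS
  -- complement of M is a prime filter; key step: M is a prime ideal
  have hbotM : (⊥ : A) ∈ M := hIM hbotI
  have hprime : ∀ a b : A, a ⊓ b ∈ M → a ∈ M ∨ b ∈ M := by
    intro a b hab
    by_contra h
    push_neg at h
    obtain ⟨haM, hbM⟩ := h
    -- the ideal generated by M and a meets F, likewise for b
    have key : ∀ c : A, c ∉ M → ∃ u m, u ∈ F ∧ m ∈ M ∧ u ≤ m ⊔ c := by
      intro c hcM
      by_contra hk
      push_neg at hk
      have : {x : A | ∃ m ∈ M, x ≤ m ⊔ c} ∈ S := by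
        refine ⟨fun x hx => ⟨x, hIM hx, le_sup_left⟩, ?_, ?_, ?_⟩
        · rintro x y ⟨m, hm, hxm⟩ hyx
          exact ⟨m, hm, le_trans hyx hxm⟩
        · rintro x y ⟨m, hm, hxm⟩ ⟨m', hm', hym⟩
          exact ⟨m ⊔ m', hMjoin m m' hm hm', by
            refine sup_le (le_trans hxm ?_) (le_trans hym ?_)
            · exact sup_le_sup le_sup_left (le_refl c)
            · exact sup_le_sup le_sup_right (le_refl c)⟩
        · rintro x ⟨m, hm, hxm⟩ hxF
          exact hk x m hxF hm hxm
      have hsub : M ⊆ {x : A | ∃ m ∈ M, x ≤ m ⊔ c} := fun x hx => ⟨x, hx, le_sup_left⟩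
      have := hMmax this hsub
      exact hcM (by
        have : c ∈ {x : A | ∃ m ∈ M, x ≤ m ⊔ c} := ⟨⊥, hbotM, by simp⟩
        exact hMmax ‹{x : A | ∃ m ∈ M, x ≤ m ⊔ c} ∈ S› hsub this)
    obtain ⟨u1, m1, hu1, hm1, hle1⟩ := key a haM
    obtain ⟨u2, m2, hu2, hm2, hle2⟩ := key b hbM
    have hle : u1 ⊓ u2 ≤ (m1 ⊔ m2) ⊔ (a ⊓ b) := by
      calc u1 ⊓ u2 ≤ (m1 ⊔ a) ⊓ (m2 ⊔ b) := inf_le_inf hle1 hle2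
        _ = ((m1 ⊔ a) ⊓ m2) ⊔ ((m1 ⊔ a) ⊓ b) := inf_sup_left _ _ _
        _ ≤ (m1 ⊔ m2) ⊔ (a ⊓ b) := by
            refine sup_le (le_trans inf_le_right (le_trans le_sup_right le_sup_left)) ?_
            rw [inf_sup_right]
            refine sup_le (le_trans inf_le_left (le_trans le_sup_left le_sup_left)) le_sup_right
    have hmem : u1 ⊓ u2 ∈ M :=
      hMdown _ _ (hMjoin _ _ (hMjoin m1 m2 hm1 hm2) hab) hle
    exact hMF _ hmem (hFmeet u1 u2 hu1 hu2)
  refine ⟨Mᶜ, ⟨?_, ?_, ?_, ?_, ?_⟩, ?_, ?_⟩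
  · exact fun h => hMF ⊤ h htopF
  · simpa using hbotM
  · intro x y hx hxy
    intro hyM
    exact hx (hMdown y x hyM hxy)
  · intro x y hx hy
    intro hxy
    rcases hprime x y hxy with h | h
    · exact hx h
    · exact hy h
  · intro x y hxy
    by_contra h
    push_neg at h
    simp only [Set.mem_compl_iff, not_not] at h
    exact hxy (hMjoin x y h.1 h.2)
  · exact fun x hx => fun hxM => hMF x hxM hx
  · intro x hx hxI
    exact hx (hIM hxI)

end Aux

section BoolAux

variable {B : Type*} [BooleanAlgebra B]

theorem baux1 {u v w : B} (h : u ⊓ w ≤ v) : u ≤ v ⊔ wᶜ := by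
  calc u = u ⊓ (w ⊔ wᶜ) := by simp
    _ = (u ⊓ w) ⊔ (u ⊓ wᶜ) := inf_sup_left _ _ _
    _ ≤ v ⊔ wᶜ := sup_le_sup h inf_le_right

theorem baux2 {u v w : B} (h : u ⊓ w ≤ v) : u ⊓ vᶜ ≤ wᶜ := by
  calc u ⊓ vᶜ ≤ (v ⊔ wᶜ) ⊓ vᶜ := inf_le_inf (baux1 h) (le_refl _)
    _ = (v ⊓ vᶜ) ⊔ (wᶜ ⊓ vᶜ) := inf_sup_right _ _ _
    _ ≤ wᶜ := by simp

end BoolAux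

theorem stmt19 {A : Type u} [DistribLattice A] [BoundedOrder A]
    (box dia : A → A)
    (hb1 : ∀ a b : A, box (a ⊓ b) = box a ⊓ box b) (hb2 : box ⊤ = ⊤)
    (hd1 : ∀ a b : A, dia (a ⊔ b) = dia a ⊔ dia b) (hd2 : dia ⊥ = ⊥) :
    ((∀ a b : A, box a ⊓ dia b ≤ dia (a ⊓ b)) ∧
     (∀ a b : A, box (a ⊔ b) ≤ box a ⊔ dia b)) ↔
    (∃ (B : Type u) (_ : BooleanAlgebra B) (g : B → B) (f : A → B),
      (∀ x y : B, g (x ⊓ y) = g x ⊓ g y) ∧ g ⊤ = ⊤ ∧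
      Function.Injective f ∧
      (∀ a b : A, f (a ⊓ b) = f a ⊓ f b) ∧
      (∀ a b : A, f (a ⊔ b) = f a ⊔ f b) ∧
      f ⊤ = ⊤ ∧ f ⊥ = ⊥ ∧
      (∀ a : A, f (box a) = g (f a)) ∧
      (∀ a : A, f (dia a) = (g ((f a)ᶜ))ᶜ)) := by
  have hbmono : ∀ x y : A, x ≤ y → box x ≤ box y := by
    intro x y hxy
    have : box (x ⊓ y) = box x ⊓ box y := hb1 x y
    rw [inf_eq_left.2 hxy] at this
    exact inf_eq_left.1 this.symm
  have hdmono : ∀ x y : A, x ≤ y → dia x ≤ dia y := by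
    intro x y hxy
    have : dia (x ⊔ y) = dia x ⊔ dia y := hd1 x y
    rw [sup_eq_right.2 hxy] at this
    exact sup_eq_right.1 this.symm
  constructor
  · rintro ⟨hax1, hax2⟩
    -- Forward: canonical extension via prime filters
    set PFA := {F : Set A // IsPF F} with hPFA
    set R : PFA → PFA → Prop :=
      fun F G => (∀ x : A, box x ∈ F.1 → x ∈ G.1) ∧ (∀ x : A, x ∈ G.1 → dia x ∈ F.1) with hR
    refine ⟨Set PFA, inferInstance,
      fun S => {F | ∀ G : PFA, R F G → G ∈ S},
      fun a => {F | a ∈ F.1}, ?_, ?_, ?_, ?_, ?_, ?_, ?_, ?_, ?_⟩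
    · intro x y
      ext F
      simp only [Set.mem_setOf_eq, Set.mem_inter_iff]
      exact ⟨fun h => ⟨fun G hG => (h G hG).1, fun G hG => (h G hG).2⟩,
        fun h G hG => ⟨h.1 G hG, h.2 G hG⟩⟩
    · ext F; simp
    · -- injectivity
      have sep : ∀ a b : A, ¬ a ≤ b → ∃ G : PFA, a ∈ G.1 ∧ b ∉ G.1 := by
        intro a b hab
        obtain ⟨G, hG, hsub, hdis⟩ := prime_separation (A := A)
          {x | a ≤ x} {x | x ≤ b}
          (fun x y hx hxy => le_trans hx hxy)
          (fun x y hx hy => le_inf hx hy) ⟨a, le_refl a⟩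
          (fun x y hx hyx => le_trans hyx hx)
          (fun x y hx hy => sup_le hx hy) ⟨b, le_refl b⟩
          (fun x hx hxb => hab (le_trans hx hxb))
        exact ⟨⟨G, hG⟩, hsub (le_refl a), fun hb => hdis b hb (le_refl b)⟩
      intro a b hfab
      by_contra hne
      have hor : ¬ a ≤ b ∨ ¬ b ≤ a := by
        by_contra hc
        push_neg at hc
        exact hne (le_antisymm hc.1 hc.2)
      rcases hor with h | h
      · obtain ⟨G, hG1, hG2⟩ := sep a b h
        exact hG2 ((Set.ext_iff.1 hfab G).1 hG1)
      · obtain ⟨G, hG1, hG2⟩ := sep b a h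
        exact hG2 ((Set.ext_iff.1 hfab G).2 hG1)
    · intro a b
      ext F
      obtain ⟨ht, hbo, hup, hmeet, hpr⟩ := F.2
      simp only [Set.mem_setOf_eq, Set.mem_inter_iff]
      exact ⟨fun h => ⟨hup _ _ h inf_le_left, hup _ _ h inf_le_right⟩,
        fun h => hmeet a b h.1 h.2⟩
    · intro a b
      ext F
      obtain ⟨ht, hbo, hup, hmeet, hpr⟩ := F.2
      simp only [Set.mem_setOf_eq, Set.mem_union]
      exact ⟨fun h => hpr a b h,
        fun h => h.elim (fun h => hup _ _ h le_sup_left) (fun h => hup _ _ h le_sup_right)⟩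
    · ext F; simpa using F.2.1
    · ext F; simpa using F.2.2.1
    · -- box case
      intro a
      ext F
      obtain ⟨ht, hbo, hup, hmeet, hpr⟩ := F.2
      simp only [Set.mem_setOf_eq]
      constructor
      · intro h G hG
        exact hG.1 a h
      · intro h
        by_contra hba
        -- build a successor prime filter omitting a
        obtain ⟨G, hG, hsub, hdis⟩ := prime_separation (A := A)
          {x | box x ∈ F.1} {x | ∃ y, dia y ∉ F.1 ∧ x ≤ y ⊔ a}
          (fun x y hx hxy => hup _ _ hx (hbmono x y hxy))
          (fun x y hx hy => by
            show box (x ⊓ y) ∈ F.1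
            rw [hb1]; exact hmeet _ _ hx hy)
          ⟨⊤, by show box ⊤ ∈ F.1; rw [hb2]; exact ht⟩
          (by rintro x z ⟨y, hy, hxy⟩ hzx; exact ⟨y, hy, le_trans hzx hxy⟩)
          (by
            rintro x x' ⟨y, hy, hxy⟩ ⟨y', hy', hxy'⟩
            refine ⟨y ⊔ y', ?_, ?_⟩
            · intro hmem
              rw [hd1] at hmem
              rcases hpr _ _ hmem with h' | h'
              · exact hy h'
              · exact hy' h'
            · refine sup_le (le_trans hxy ?_) (le_trans hxy' ?_)
              · exact sup_le_sup le_sup_left (le_refl a)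
              · exact sup_le_sup le_sup_right (le_refl a))
          ⟨a, ⊥, by rw [hd2]; exact hbo, by simp⟩
          (by
            rintro x hx ⟨y, hy, hxy⟩
            have h1 : box x ≤ box (a ⊔ y) := hbmono _ _ (by rw [sup_comm]; exact hxy)
            have h2 : box (a ⊔ y) ∈ F.1 := hup _ _ hx h1
            have h3 : box a ⊔ dia y ∈ F.1 := hup _ _ h2 (hax2 a y)
            rcases hpr _ _ h3 with h' | h'
            · exact hba h'
            · exact hy h')
        have haG : a ∈ G := h ⟨G, hG⟩ ⟨fun x hx => hsub hx,
          fun x hx => by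
            by_contra hd
            exact hdis x hx ⟨x, hd, le_sup_left⟩⟩
        exact hdis a haG ⟨⊥, by rw [hd2]; exact hbo, by simp⟩
    · -- dia case
      intro a
      ext F
      obtain ⟨ht, hbo, hup, hmeet, hpr⟩ := F.2
      simp only [Set.mem_setOf_eq, Set.mem_compl_iff, not_forall]
      constructor
      · intro h
        obtain ⟨G, hG, hsub, hdis⟩ := prime_separation (A := A)
          {x | ∃ z, box z ∈ F.1 ∧ z ⊓ a ≤ x} {x | dia x ∉ F.1}
          (by rintro x y ⟨z, hz, hzx⟩ hxy; exact ⟨z, hz, le_trans hzx hxy⟩)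
          (by
            rintro x y ⟨z, hz, hzx⟩ ⟨z', hz', hzy⟩
            refine ⟨z ⊓ z', by rw [hb1]; exact hmeet _ _ hz hz', ?_⟩
            refine le_inf (le_trans ?_ hzx) (le_trans ?_ hzy)
            · exact inf_le_inf_right a inf_le_left
            · exact inf_le_inf_right a inf_le_right)
          ⟨⊤, ⊤, by rw [hb2]; exact ht, le_top⟩
          (by
            intro x y hx hyx
            intro hy
            exact hx (hup _ _ hy (hdmono y x hyx)))
          (by
            intro x y hx hy
            intro hxy
            rw [hd1] at hxy
            rcases hpr _ _ hxy with h' | h'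
            · exact hx h'
            · exact hy h')
          ⟨⊥, by simp only [Set.mem_setOf_eq, hd2]; exact hbo⟩
          (by
            rintro x ⟨z, hz, hzx⟩ hdx
            have h1 : box z ⊓ dia a ≤ dia x := le_trans (hax1 z a) (hdmono _ _ hzx)
            exact hdx (hup _ _ (hmeet _ _ hz h) h1))
        refine ⟨⟨G, hG⟩, ⟨⟨fun x hx => hsub ⟨x, hx, inf_le_left⟩,
          fun x hx => by
            by_contra hd
            exact hdis x hx hd⟩, ?_⟩⟩
        simp only [Set.mem_compl_iff, Set.mem_setOf_eq, not_not]
        exact hsub ⟨⊤, by rw [hb2]; exact ht, by simp⟩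
      · rintro ⟨G, hRG, hGa⟩
        simp only [Set.mem_compl_iff, Set.mem_setOf_eq, not_not] at hGa
        exact hRG.2 a hGa
  · -- Reverse direction
    rintro ⟨B, instB, g, f, hg1, hg2, hinj, hf1, hf2, hft, hfb, hfbox, hfdia⟩
    have hgmono : ∀ x y : B, x ≤ y → g x ≤ g y := by
      intro x y hxy
      have : g (x ⊓ y) = g x ⊓ g y := hg1 x y
      rw [inf_eq_left.2 hxy] at this
      exact inf_eq_left.1 this.symm
    have hrefl : ∀ a b : A, f a ≤ f b → a ≤ b := by
      intro a b hab
      have : f (a ⊓ b) = f a := by rw [hf1]; exact inf_eq_left.2 hab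
      have := hinj this
      exact inf_eq_left.1 this
    constructor
    · intro a b
      apply hrefl
      rw [hf1, hfbox, hfdia, hfdia, hf1]
      set x := f a
      set y := f b
      have key : g x ⊓ g ((x ⊓ y)ᶜ) ≤ g yᶜ := by
        rw [← hg1]
        refine le_trans (le_of_eq (congrArg g ?_)) (hgmono _ _ (inf_le_right : x ⊓ yᶜ ≤ yᶜ))
        rw [compl_inf, inf_sup_left]
        simp
      exact baux2 key
    · intro a b
      apply hrefl
      rw [hfbox, hf2, hf2, hfbox, hfdia]
      set x := f a
      set y := f b
      have key : g (x ⊔ y) ⊓ g yᶜ ≤ g x := by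
        rw [← hg1]
        refine le_trans (le_of_eq (congrArg g ?_)) (hgmono _ _ (inf_le_left : x ⊓ yᶜ ≤ x))
        rw [inf_sup_right]
        simp
      exact baux1 key
end
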